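/- arXiv:1909.07235 — 6 statements merged into one kernel-verified Lean document; each statement's English description precedes it below -/
import Mathlib

section
/- For a simple graph G, the skew throttling number th_-(G) equals 1 if and only if G is isomorphic to K_1 (a single vertex) or to rK_2 (the disjoint union of r ≥ 1 copies of K_2). -/
open SimpleGraph

/-- One round of skew zero forcing: every vertex (blue or white) with exactly one
white neighbor colors that neighbor blue. -/
def skewStep {V : Type*} (G : SimpleGraph V) (B : Set V) : Set V :=
  B ∪ {w | ∃ v, G.Adj v w ∧ ∀ u, G.Adj v u → u ∉ B → u = w}

/-- The set of blue vertices after `n` rounds of skew zero forcing starting from `S`. -/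
def skewIter {V : Type*} (G : SimpleGraph V) (S : Set V) : ℕ → Set V
  | 0 => S
  | n + 1 => skewStep G (skewIter G S n)

/-- `S` is a skew zero forcing set of `G`. -/
def IsSkewZFS {V : Type*} (G : SimpleGraph V) (S : Set V) : Prop :=
  ∃ n, skewIter G S n = Set.univ

/-- The skew propagation time `pt₋(G;S)`: the number of rounds needed for all
vertices to become blue. -/
noncomputable def skewPt {V : Type*} (G : SimpleGraph V) (S : Set V) : ℕ :=
  sInf {n | skewIter G S n = Set.univ}

/-- The skew throttling number `th₋(G)`. -/
noncomputable def skewTh {V : Type*} (G : SimpleGraph V) : ℕ :=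
  sInf {m | ∃ S : Set V, IsSkewZFS G S ∧ m = S.ncard + skewPt G S}

/-- The skew throttling number over sets of size `k`, `th₋(G,k)`. -/
noncomputable def skewThK {V : Type*} (G : SimpleGraph V) (k : ℕ) : ℕ :=
  sInf {m | ∃ S : Set V, IsSkewZFS G S ∧ S.ncard = k ∧ m = S.ncard + skewPt G S}

/-- The skew zero forcing number `Z₋(G)`. -/
noncomputable def skewZ {V : Type*} (G : SimpleGraph V) : ℕ :=
  sInf {m | ∃ S : Set V, IsSkewZFS G S ∧ m = S.ncard}

/-- The skew propagation time `pt₋(G)`: minimum propagation time over minimum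
skew zero forcing sets. -/
noncomputable def skewPtMin {V : Type*} (G : SimpleGraph V) : ℕ :=
  sInf {m | ∃ S : Set V, IsSkewZFS G S ∧ S.ncard = skewZ G ∧ m = skewPt G S}

/-- `rK₂`: the disjoint union of `r` copies of `K₂`. -/
def rK2 (r : ℕ) : SimpleGraph (Fin r × Fin 2) :=
  SimpleGraph.fromRel (fun a b => a.1 = b.1)

/-- Disjoint union of two simple graphs. -/
def disjUnion {α β : Type*} (G : SimpleGraph α) (H : SimpleGraph β) :
    SimpleGraph (α ⊕ β) :=
  SimpleGraph.fromRel (fun x y =>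
    match x, y with
    | Sum.inl a, Sum.inl b => G.Adj a b
    | Sum.inr a, Sum.inr b => H.Adj a b
    | _, _ => False)

/-- The corona `G ∘ K₁`: attach a pendant leaf to every vertex of `G`. -/
def coronaK1 {α : Type*} (G : SimpleGraph α) : SimpleGraph (α ⊕ α) :=
  SimpleGraph.fromRel (fun x y =>
    match x, y with
    | Sum.inl a, Sum.inl b => G.Adj a b
    | Sum.inl a, Sum.inr b => a = b
    | _, _ => False)

/-- The corona `G ∘ K₂`: attach a private copy of `K₂` (a triangle) to every
vertex of `G`. -/
def coronaK2 {α : Type*} (G : SimpleGraph α) : SimpleGraph (α ⊕ α × Fin 2) :=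
  SimpleGraph.fromRel (fun x y =>
    match x, y with
    | Sum.inl a, Sum.inl b => G.Adj a b
    | Sum.inl a, Sum.inr b => a = b.1
    | Sum.inr a, Sum.inr b => a.1 = b.1
    | _, _ => False)

/-- The graph `H(s,t)` with hub `b`, pendant paths `b xᵢ yᵢ` and triangles `b zᵢ wᵢ`. -/
def Hgraph (s t : ℕ) : SimpleGraph (Unit ⊕ ((Fin s × Fin 2) ⊕ (Fin t × Fin 2))) :=
  SimpleGraph.fromRel (fun x y =>
    match x, y with
    | Sum.inl _, Sum.inr (Sum.inl p) => p.2 = 0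
    | Sum.inl _, Sum.inr (Sum.inr _) => True
    | Sum.inr (Sum.inl p), Sum.inr (Sum.inl q) => p.1 = q.1
    | Sum.inr (Sum.inr p), Sum.inr (Sum.inr q) => p.1 = q.1
    | _, _ => False)

/-- The friendship graph `Fₙ`: a universal vertex joined to `n` disjoint copies of `K₂`. -/
def friendshipGraph (n : ℕ) : SimpleGraph (Unit ⊕ (Fin n × Fin 2)) :=
  SimpleGraph.fromRel (fun x y =>
    match x, y with
    | Sum.inl _, Sum.inr _ => True
    | Sum.inr p, Sum.inr q => p.1 = q.1
    | _, _ => False)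

/-- The balanced spider `T_{p,ℓ}`: a center with `p` legs of `ℓ` vertices each. -/
def spider (p ℓ : ℕ) : SimpleGraph (Unit ⊕ (Fin p × Fin ℓ)) :=
  SimpleGraph.fromRel (fun x y =>
    match x, y with
    | Sum.inl _, Sum.inr q => q.2.val = 0
    | Sum.inr q, Sum.inr q' => q.1 = q'.1 ∧ q'.2.val = q.2.val + 1
    | _, _ => False)

/-- The hypercube graph `Qₙ`: binary strings of length `n`, adjacent iff they
differ in exactly one coordinate. -/
def hypercube (n : ℕ) : SimpleGraph (Fin n → Bool) :=
  SimpleGraph.fromRel (fun x y => ∃! i, x i ≠ y i)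
lemma rK2_adj {r : ℕ} (a b : Fin r × Fin 2) :
    (rK2 r).Adj a b ↔ a ≠ b ∧ a.1 = b.1 := by
  simp only [rK2, SimpleGraph.fromRel_adj]
  constructor
  · rintro ⟨h1, h2 | h2⟩ <;> exact ⟨h1, by omega⟩
  · rintro ⟨h1, h2⟩; exact ⟨h1, Or.inl h2⟩

lemma exists_iso_rK2 {V : Type*} [Fintype V] [Nonempty V] (G : SimpleGraph V)
    (h : ∀ w : V, ∃ v, G.Adj w v ∧ ∀ u, G.Adj w u → u = v) :
    ∃ r : ℕ, 1 ≤ r ∧ Nonempty (G ≃g rK2 r) := by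
  classical
  set m : V → V := fun w => (h w).choose with hmdef
  have hm1 : ∀ w, G.Adj w (m w) := fun w => (h w).choose_spec.1
  have hm2 : ∀ w u, G.Adj w u → u = m w := fun w => (h w).choose_spec.2
  have hmm : ∀ w, m (m w) = w := fun w => (hm2 (m w) w (hm1 w).symm).symm
  have hne : ∀ w, w ≠ m w := fun w => (hm1 w).ne
  set e : V ≃ Fin (Fintype.card V) := Fintype.equivFin V with hedef
  set A : Finset V := Finset.univ.filter (fun v => e v < e (m v)) with hAdef
  have memA : ∀ v, v ∈ A ↔ e v < e (m v) := by intro v; simp [hAdef]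
  have hkey : ∀ v, v ∉ A → m v ∈ A := by
    intro v hv
    rw [memA] at hv ⊢
    rw [hmm]
    have hne' : e (m v) ≠ e v := fun hc => hne v (e.injective hc).symm
    omega
  have hnA : ∀ v, v ∈ A → m v ∉ A := by
    intro v hv hc
    rw [memA] at hv hc
    rw [hmm] at hc
    omega
  have hApos : 1 ≤ A.card := by
    obtain ⟨v⟩ := ‹Nonempty V›
    rcases Classical.em (v ∈ A) with hv | hv
    · exact Finset.card_pos.mpr ⟨v, hv⟩
    · exact Finset.card_pos.mpr ⟨m v, hkey v hv⟩
  set q : A ≃ Fin A.card := A.equivFin with hqdef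
  refine ⟨A.card, hApos, ⟨?_⟩⟩
  set F : V → Fin A.card × Fin 2 :=
    fun v => if hv : v ∈ A then (q ⟨v, hv⟩, 0) else (q ⟨m v, hkey v hv⟩, 1) with hFdef
  set Fi : Fin A.card × Fin 2 → V :=
    fun p => if p.2 = 0 then (q.symm p.1 : V) else m (q.symm p.1 : V) with hFidef
  have hFA : ∀ v (hv : v ∈ A), F v = (q ⟨v, hv⟩, 0) := by
    intro v hv; simp [hFdef, hv]
  have hFnA : ∀ v (hv : v ∉ A), F v = (q ⟨m v, hkey v hv⟩, 1) := by
    intro v hv; simp [hFdef, hv]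
  have hleft : Function.LeftInverse Fi F := by
    intro v
    rcases Classical.em (v ∈ A) with hv | hv
    · rw [hFA v hv]; simp [hFidef]
    · rw [hFnA v hv]
      have : (1 : Fin 2) ≠ 0 := by decide
      simp only [hFidef, this, if_neg]
      rw [Equiv.symm_apply_apply]
      exact hmm v
  have hright : Function.RightInverse Fi F := by
    rintro ⟨i, j⟩
    rcases Classical.em (j = 0) with hj | hj
    · subst hj
      have hmem : (q.symm i : V) ∈ A := (q.symm i).2
      simp only [hFidef, if_pos rfl]
      rw [hFA _ hmem]
      refine Prod.ext ?_ rfl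
      have : (⟨(q.symm i : V), hmem⟩ : {x // x ∈ A}) = q.symm i := Subtype.ext rfl
      rw [this, Equiv.apply_symm_apply]
    · have hj1 : j = 1 := by omega
      subst hj1
      have hmem : (q.symm i : V) ∈ A := (q.symm i).2
      have hnmem : m (q.symm i : V) ∉ A := hnA _ hmem
      have h1 : Fi (i, 1) = m (q.symm i : V) := by simp [hFidef]
      rw [h1, hFnA _ hnmem]
      refine Prod.ext ?_ rfl
      have : (⟨m (m (q.symm i : V)), hkey _ hnmem⟩ : {x // x ∈ A}) = q.symm i :=
        Subtype.ext (hmm _)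
      rw [this, Equiv.apply_symm_apply]
  have hFinj : Function.Injective F := hleft.injective
  -- adjacency iff
  have hadj : ∀ a b : V, (rK2 A.card).Adj (F a) (F b) ↔ G.Adj a b := by
    intro a b
    rw [rK2_adj]
    constructor
    · rintro ⟨hne', hfst⟩
      have hab : a ≠ b := fun hc => hne' (by rw [hc])
      rcases Classical.em (a ∈ A) with ha | ha <;> rcases Classical.em (b ∈ A) with hb | hb
      · rw [hFA a ha, hFA b hb] at hfst
        exact absurd (Subtype.ext_iff.mp (q.injective hfst)) hab
      · rw [hFA a ha, hFnA b hb] at hfst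
        have : a = m b := Subtype.ext_iff.mp (q.injective hfst)
        have : b = m a := by rw [this, hmm]
        rw [this]; exact hm1 a
      · rw [hFnA a ha, hFA b hb] at hfst
        have : m a = b := Subtype.ext_iff.mp (q.injective hfst)
        rw [← this]; exact hm1 a
      · rw [hFnA a ha, hFnA b hb] at hfst
        have : m a = m b := Subtype.ext_iff.mp (q.injective hfst)
        have : a = b := by rw [← hmm a, this, hmm]
        exact absurd this hab
    · intro hab
      have hb : b = m a := hm2 a b hab
      have hne2 : F a ≠ F b := fun hc => hab.ne (hFinj hc)
      refine ⟨hne2, ?_⟩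
      rcases Classical.em (a ∈ A) with ha | ha
      · have hbn : b ∉ A := by rw [hb]; exact hnA a ha
        rw [hFA a ha, hFnA b hbn]
        simp only
        congr 1
        apply Subtype.ext
        simp [hb, hmm]
      · have hbn : b ∈ A := by rw [hb]; exact hkey a ha
        rw [hFnA a ha, hFA b hbn]
        simp only
        congr 1
        apply Subtype.ext
        simp [hb]
  exact ⟨⟨F, Fi, hleft, hright⟩, fun {a b} => hadj a b⟩

/-- `th₋(G) = 1` iff `G ≅ K₁` or `G ≅ rK₂` for some `r ≥ 1`. -/
theorem skewTh_eq_one_iff {V : Type*} [Fintype V] (G : SimpleGraph V) :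
    skewTh G = 1 ↔
      (Nonempty (G ≃g (⊥ : SimpleGraph (Fin 1))) ∨
        ∃ r : ℕ, 1 ≤ r ∧ Nonempty (G ≃g rK2 r)) := by
  classical
  set T : Set ℕ := {m | ∃ S : Set V, IsSkewZFS G S ∧ m = S.ncard + skewPt G S} with hTdef
  constructor
  · intro h
    have hTne : T.Nonempty := by
      by_contra hc
      rw [Set.not_nonempty_iff_eq_empty] at hc
      rw [skewTh, ← hTdef, hc, Nat.sInf_empty] at h
      omega
    have h1T : 1 ∈ T := by
      rw [skewTh, ← hTdef] at h
      rw [← h]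
      exact Nat.sInf_mem hTne
    obtain ⟨S, hS, hsum⟩ := h1T
    have hPne : Set.Nonempty {n | skewIter G S n = Set.univ} := hS
    have hptmem : skewIter G S (skewPt G S) = Set.univ :=
      Nat.sInf_mem (s := {n | skewIter G S n = Set.univ}) hPne
    rcases Nat.lt_or_ge S.ncard 1 with hc | hc
    · -- S.ncard = 0, skewPt = 1
      right
      have hS0 : S.ncard = 0 := by omega
      have hpt1 : skewPt G S = 1 := by omega
      have hSe : S = ∅ := (Set.ncard_eq_zero S.toFinite).mp hS0
      subst hSe
      rw [hpt1] at hptmem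
      have h0notP : (0 : ℕ) ∉ {n | skewIter G (∅ : Set V) n = Set.univ} := by
        intro h0
        have : skewPt G (∅ : Set V) = 0 := by
          rw [skewPt]; exact Nat.sInf_eq_zero.mpr (Or.inl h0)
        omega
      have hVne : Nonempty V := by
        by_contra hc'
        have hie : IsEmpty V := not_nonempty_iff.mp hc'
        exact h0notP (by simp [skewIter, Set.eq_empty_of_isEmpty])
      have hstep : ∀ w : V, ∃ v, G.Adj v w ∧ ∀ u, G.Adj v u → u = w := by
        intro w
        have hw : w ∈ skewStep G (∅ : Set V) := by
          rw [show skewStep G (∅ : Set V) = skewIter G (∅ : Set V) 1 from rfl, hptmem]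
          trivial
        rcases hw with hw | hw
        · exact absurd hw (Set.notMem_empty w)
        · obtain ⟨v, hv, hu⟩ := hw
          exact ⟨v, hv, fun u hadj => hu u hadj (Set.notMem_empty u)⟩
      have h3 : ∀ w : V, ∃ v, G.Adj w v ∧ ∀ u, G.Adj w u → u = v := by
        intro w
        obtain ⟨v, hv, hu⟩ := hstep w
        obtain ⟨v', hv', hu'⟩ := hstep v
        have hvw : v' = w := hu v' hv'.symm
        subst hvw
        exact ⟨v, hv', hu'⟩
      exact exists_iso_rK2 G h3
    · -- S.ncard = 1, skewPt = 0
      left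
      have hS1 : S.ncard = 1 := by omega
      have hpt0 : skewPt G S = 0 := by omega
      rw [hpt0] at hptmem
      have hSu : S = Set.univ := hptmem
      rw [hSu, Set.ncard_univ, Nat.card_eq_fintype_card] at hS1
      have e : V ≃ Fin 1 := Fintype.equivFinOfCardEq hS1
      refine ⟨⟨e, ?_⟩⟩
      intro a b
      simp only [SimpleGraph.bot_adj, false_iff]
      intro hab
      have : a = b := by
        have : Subsingleton V := Fintype.card_le_one_iff_subsingleton.mp (le_of_eq hS1)
        exact Subsingleton.elim a b
      rw [this] at hab
      exact G.irrefl hab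
  · intro h
    have h1T : 1 ∈ T := by
      rcases h with hK | ⟨r, hr, hf⟩
      · obtain ⟨f⟩ := hK
        refine ⟨Set.univ, ⟨0, rfl⟩, ?_⟩
        have hc1 : Fintype.card V = 1 := by
          rw [Fintype.card_congr f.toEquiv]; simp
        have hpt : skewPt G (Set.univ : Set V) = 0 := by
          rw [skewPt]; exact Nat.sInf_eq_zero.mpr (Or.inl rfl)
        rw [hpt, Set.ncard_univ, Nat.card_eq_fintype_card, hc1]
      · obtain ⟨f⟩ := hf
        have hVne : Nonempty V := ⟨f.symm (⟨0, hr⟩, 0)⟩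
        have hstep : skewStep G (∅ : Set V) = Set.univ := by
          ext w
          simp only [Set.mem_univ, iff_true, skewStep, Set.mem_union,
            Set.mem_empty_iff_false, false_or, Set.mem_setOf_eq]
          set p := f w with hp
          set ow : Fin 2 := ⟨1 - (p.2 : ℕ), by omega⟩ with how
          have howne : ow ≠ p.2 := by
            intro hc
            have := congrArg Fin.val hc
            simp only [how] at this
            have : (p.2 : ℕ) < 2 := p.2.isLt
            omega
          refine ⟨f.symm (p.1, ow), ?_, ?_⟩
          · rw [← f.map_rel_iff]
            rw [RelIso.apply_symm_apply]
            rw [rK2_adj]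
            refine ⟨?_, rfl⟩
            intro hc
            exact howne (congrArg Prod.snd hc)
          · intro u hadj _
            rw [← f.map_rel_iff, RelIso.apply_symm_apply, rK2_adj] at hadj
            obtain ⟨hne', hfst⟩ := hadj
            have hsnd : (f u).2 = p.2 := by
              have h2 : (f u).2 ≠ ow := by
                intro hc
                exact hne' (Prod.ext hfst.symm hc).symm
              have hlt : ((f u).2 : ℕ) < 2 := (f u).2.isLt
              have hlt2 : ((p.2) : ℕ) < 2 := p.2.isLt
              have : ((f u).2 : ℕ) ≠ 1 - (p.2 : ℕ) := fun hc =>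
                h2 (Fin.ext (by simp [how, hc]))
              exact Fin.ext (by omega)
            have hfu : f u = p := Prod.ext hfst.symm hsnd
            rw [hp] at hfu
            exact f.injective hfu
        have hZ : IsSkewZFS G (∅ : Set V) := ⟨1, hstep⟩
        refine ⟨∅, hZ, ?_⟩
        have h0not : skewIter G (∅ : Set V) 0 ≠ Set.univ := by
          intro hc
          obtain ⟨v⟩ := hVne
          have : v ∈ (∅ : Set V) := by rw [show skewIter G (∅:Set V) 0 = ∅ from rfl] at hc; rw [hc]; trivial
          exact this
        have hle : skewPt G (∅ : Set V) ≤ 1 := Nat.sInf_le hstep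
        have hne0 : skewPt G (∅ : Set V) ≠ 0 := by
          intro hc
          have := Nat.sInf_mem (s := {n | skewIter G (∅ : Set V) n = Set.univ}) hZ
          rw [show sInf {n | skewIter G (∅ : Set V) n = Set.univ} = skewPt G (∅:Set V) from rfl, hc] at this
          exact h0not this
        have : skewPt G (∅ : Set V) = 1 := by omega
        rw [this]
        simp
    have hVne : Nonempty V := by
      rcases h with hK | ⟨r, hr, hf⟩
      · obtain ⟨f⟩ := hK
        exact ⟨f.symm 0⟩
      · obtain ⟨f⟩ := hf
        exact ⟨f.symm (⟨0, hr⟩, 0)⟩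
    have h0not : (0 : ℕ) ∉ T := by
      rintro ⟨S, hS, hsum⟩
      have hS0 : S.ncard = 0 := by omega
      have hpt0 : skewPt G S = 0 := by omega
      have hptmem : skewIter G S (skewPt G S) = Set.univ :=
        Nat.sInf_mem (s := {n | skewIter G S n = Set.univ}) hS
      rw [hpt0] at hptmem
      have hSu : S = Set.univ := hptmem
      rw [hSu, Set.ncard_univ, Nat.card_eq_fintype_card] at hS0
      exact absurd hS0 (Fintype.card_ne_zero)
    have hle : skewTh G ≤ 1 := Nat.sInf_le h1T
    have hne0 : skewTh G ≠ 0 := by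
      intro hc
      rw [skewTh, ← hTdef] at hc
      rcases Nat.sInf_eq_zero.mp hc with h0 | hemp
      · exact h0not h0
      · rw [hemp] at h1T; exact h1T
    omega
end

section
/- A simple graph G satisfies th_-(G) = th_-(G,0) = 2 if and only if G is isomorphic to (Ĝ ∘ K_1) ⊔ rK_2, where Ĝ is a graph of order at least two each of whose connected components contains an edge, and r ≥ 0 is an integer. -/
open SimpleGraph

open Sum

namespace SkewAux

variable {V : Type*}

lemma mem_skewStep {G : SimpleGraph V} {B : Set V} {x : V} :
    x ∈ skewStep G B ↔ x ∈ B ∨ ∃ v, G.Adj v x ∧ ∀ u, G.Adj v u → u ∉ B → u = x :=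
  Set.mem_union _ _ _

lemma skewStep_mono (G : SimpleGraph V) {B B' : Set V} (h : B ⊆ B') :
    skewStep G B ⊆ skewStep G B' := by
  intro x hx
  rcases mem_skewStep.1 hx with hx | ⟨v, hadj, hu⟩
  · exact mem_skewStep.2 (Or.inl (h hx))
  · exact mem_skewStep.2 (Or.inr ⟨v, hadj, fun u hu' hu'' => hu u hu' fun hB => hu'' (h hB)⟩)

lemma skewIter_one (G : SimpleGraph V) (S : Set V) : skewIter G S 1 = skewStep G S := rfl

lemma skewIter_two (G : SimpleGraph V) (S : Set V) :
    skewIter G S 2 = skewStep G (skewStep G S) := rfl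

lemma skewStep_univ (G : SimpleGraph V) : skewStep G Set.univ = Set.univ :=
  Set.eq_univ_of_univ_subset Set.subset_union_left

lemma skewIter_univ_succ {G : SimpleGraph V} {S : Set V} {n : ℕ}
    (h : skewIter G S n = Set.univ) : skewIter G S (n + 1) = Set.univ := by
  show skewStep G (skewIter G S n) = Set.univ
  rw [h, skewStep_univ]

/-- transfer of skewStep along a graph isomorphism -/
lemma skewStep_image {W : Type*} {G : SimpleGraph V} {H : SimpleGraph W} (e : G ≃g H)
    (B : Set V) : skewStep H (e '' B) = e '' skewStep G B := by
  ext x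
  obtain ⟨y, rfl⟩ := e.toEquiv.surjective x
  show (e y : W) ∈ _ ↔ (e y : W) ∈ _
  have himg : ∀ (C : Set V) (z : V), (e z : W) ∈ e '' C ↔ z ∈ C := by
    intro C z
    exact ⟨fun ⟨z', hz', hzz⟩ => by rwa [← e.toEquiv.injective hzz], fun h => ⟨z, h, rfl⟩⟩
  rw [himg]
  rw [mem_skewStep, mem_skewStep]
  constructor
  · rintro (h | ⟨v, hadj, hu⟩)
    · exact Or.inl ((himg B y).1 h)
    · refine Or.inr ?_
      obtain ⟨v', rfl⟩ := e.toEquiv.surjective v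
      refine ⟨v', e.map_adj_iff.1 hadj, fun u hu' hu'' => ?_⟩
      have := hu (e u) (e.map_adj_iff.2 hu') (fun hc => hu'' ((himg B u).1 hc))
      exact e.toEquiv.injective this
  · rintro (h | ⟨v, hadj, hu⟩)
    · exact Or.inl ((himg B y).2 h)
    · refine Or.inr ⟨e v, e.map_adj_iff.2 hadj, fun u hu' hu'' => ?_⟩
      obtain ⟨u', rfl⟩ := e.toEquiv.surjective u
      have := hu u' (e.map_adj_iff.1 hu') (fun hc => hu'' ((himg B u').2 hc))
      exact congrArg e this

lemma skewIter_image {W : Type*} {G : SimpleGraph V} {H : SimpleGraph W} (e : G ≃g H)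
    (S : Set V) (n : ℕ) : skewIter H (e '' S) n = e '' skewIter G S n := by
  induction n with
  | zero => rfl
  | succ n ih =>
    show skewStep H (skewIter H (e '' S) n) = e '' skewStep G (skewIter G S n)
    rw [ih, skewStep_image e]

lemma image_empty_eq {W : Type*} {G : SimpleGraph V} {H : SimpleGraph W} (e : G ≃g H) :
    (e '' (∅ : Set V)) = (∅ : Set W) := Set.image_empty _

lemma image_univ_iff {W : Type*} {G : SimpleGraph V} {H : SimpleGraph W} (e : G ≃g H)
    {C : Set V} : e '' C = Set.univ ↔ C = Set.univ := by
  constructor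
  · intro h
    apply Set.eq_univ_of_forall
    intro x
    have : (e x : W) ∈ e '' C := h ▸ Set.mem_univ _
    obtain ⟨z, hz, hzz⟩ := this
    rwa [← e.toEquiv.injective hzz]
  · rintro rfl
    exact Set.eq_univ_of_forall fun w => ⟨e.symm w, Set.mem_univ _, e.apply_symm_apply w⟩

lemma skewIter_iso {W : Type*} {G : SimpleGraph V} {H : SimpleGraph W} (e : G ≃g H)
    (n : ℕ) : skewIter G (∅ : Set V) n = Set.univ ↔ skewIter H (∅ : Set W) n = Set.univ := by
  have := skewIter_image e (∅ : Set V) n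
  rw [Set.image_empty] at this
  rw [this, image_univ_iff]


section Adj

variable {α β : Type*} (G : SimpleGraph α) (H : SimpleGraph β)

@[simp] lemma disjUnion_adj_inl_inl (a b : α) :
    (disjUnion G H).Adj (inl a) (inl b) ↔ G.Adj a b := by
  rw [disjUnion, SimpleGraph.fromRel_adj]
  constructor
  · rintro ⟨-, h | h⟩
    · exact h
    · exact h.symm
  · intro h
    exact ⟨by simpa using h.ne, Or.inl h⟩

@[simp] lemma disjUnion_adj_inl_inr (a : α) (b : β) :
    ¬ (disjUnion G H).Adj (inl a) (inr b) := by
  rw [disjUnion, SimpleGraph.fromRel_adj]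
  rintro ⟨-, h | h⟩ <;> exact h

@[simp] lemma disjUnion_adj_inr_inl (a : β) (b : α) :
    ¬ (disjUnion G H).Adj (inr a) (inl b) := by
  rw [disjUnion, SimpleGraph.fromRel_adj]
  rintro ⟨-, h | h⟩ <;> exact h

@[simp] lemma disjUnion_adj_inr_inr (a b : β) :
    (disjUnion G H).Adj (inr a) (inr b) ↔ H.Adj a b := by
  rw [disjUnion, SimpleGraph.fromRel_adj]
  constructor
  · rintro ⟨-, h | h⟩
    · exact h
    · exact h.symm
  · intro h
    exact ⟨by simpa using h.ne, Or.inl h⟩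

@[simp] lemma coronaK1_adj_inl_inl (a b : α) :
    (coronaK1 G).Adj (inl a) (inl b) ↔ G.Adj a b := by
  rw [coronaK1, SimpleGraph.fromRel_adj]
  constructor
  · rintro ⟨-, h | h⟩
    · exact h
    · exact h.symm
  · intro h
    exact ⟨by simpa using h.ne, Or.inl h⟩

@[simp] lemma coronaK1_adj_inl_inr (a b : α) :
    (coronaK1 G).Adj (inl a) (inr b) ↔ a = b := by
  rw [coronaK1, SimpleGraph.fromRel_adj]
  constructor
  · rintro ⟨-, h | h⟩
    · exact h
    · exact h.elim
  · intro h
    exact ⟨by simp, Or.inl h⟩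

@[simp] lemma coronaK1_adj_inr_inl (a b : α) :
    (coronaK1 G).Adj (inr a) (inl b) ↔ b = a := by
  rw [coronaK1, SimpleGraph.fromRel_adj]
  constructor
  · rintro ⟨-, h | h⟩
    · exact h.elim
    · exact h
  · intro h
    exact ⟨by simp, Or.inr h⟩

@[simp] lemma coronaK1_adj_inr_inr (a b : α) :
    ¬ (coronaK1 G).Adj (inr a) (inr b) := by
  rw [coronaK1, SimpleGraph.fromRel_adj]
  rintro ⟨-, h | h⟩ <;> exact h

@[simp] lemma rK2_adj {r : ℕ} (p q : Fin r × Fin 2) :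
    (rK2 r).Adj p q ↔ p.1 = q.1 ∧ p.2 ≠ q.2 := by
  rw [rK2, SimpleGraph.fromRel_adj]
  constructor
  · rintro ⟨hne, h | h⟩
    · exact ⟨h, fun hs => hne (Prod.ext h hs)⟩
    · exact ⟨h.symm, fun hs => hne (Prod.ext h.symm hs)⟩
  · rintro ⟨h1, h2⟩
    exact ⟨fun hs => h2 (by rw [hs]), Or.inl h1⟩

end Adj

section Backward

variable {m r : ℕ} (Ghat : SimpleGraph (Fin m))

local notation "D" => disjUnion (coronaK1 Ghat) (rK2 r)

lemma fin2_cases (k : Fin 2) : k = 0 ∨ k = 1 := by omega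

lemma backward_iter2 (hdeg : ∀ v, ∃ u, Ghat.Adj v u) :
    skewIter D (∅ : Set _) 2 = Set.univ := by
  have hsub : ∀ x : (Fin m ⊕ Fin m) ⊕ (Fin r × Fin 2),
      (∀ a, x ≠ inl (inr a)) → x ∈ skewIter D (∅ : Set _) 1 := by
    intro x hx
    rw [skewIter_one]
    refine mem_skewStep.2 (Or.inr ?_)
    match x with
    | inl (inl a) =>
      refine ⟨inl (inr a), by simp, ?_⟩
      rintro (u | u) hadj -
      · match u with
        | inl b => simp only [disjUnion_adj_inl_inl, coronaK1_adj_inr_inl] at hadj; rw [hadj]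
        | inr b => simp only [disjUnion_adj_inl_inl] at hadj
                   exact absurd hadj (coronaK1_adj_inr_inr Ghat a b)
      · exact absurd hadj (disjUnion_adj_inl_inr _ _ _ _)
    | inl (inr a) => exact absurd rfl (hx a)
    | inr (j, k) =>
      refine ⟨inr (j, k + 1), ?_, ?_⟩
      · rw [disjUnion_adj_inr_inr, rK2_adj]
        refine ⟨rfl, ?_⟩
        show k + 1 ≠ k
        rcases fin2_cases k with rfl | rfl <;> decide
      · rintro (w | ⟨u1, u2⟩) hadj -
        · exact absurd hadj (disjUnion_adj_inr_inl _ _ _ _)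
        · rw [disjUnion_adj_inr_inr, rK2_adj] at hadj
          obtain ⟨h1, h2⟩ := hadj
          simp only at h1 h2
          have hu2 : u2 = k := by
            rcases fin2_cases k with rfl | rfl <;> rcases fin2_cases u2 with rfl | rfl <;>
              first | rfl | exact absurd (by decide) h2
          rw [← h1, hu2]
  apply Set.eq_univ_of_forall
  intro x
  rw [skewIter_two]
  by_cases hx : ∀ a, x ≠ inl (inr a)
  · exact mem_skewStep.2 (Or.inl (by rw [← skewIter_one]; exact hsub x hx))
  · push_neg at hx
    obtain ⟨a, rfl⟩ := hx
    refine mem_skewStep.2 (Or.inr ⟨inl (inl a), by simp, ?_⟩)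
    intro u hadj hu
    match u with
    | inl (inl b) =>
      exact absurd (hsub (inl (inl b)) (by simp)) hu
    | inl (inr b) =>
      rw [disjUnion_adj_inl_inl, coronaK1_adj_inl_inr] at hadj
      rw [hadj]
    | inr p =>
      exact absurd (hsub (inr p) (by simp)) hu

lemma backward_iter1 (hm : 2 ≤ m) (hdeg : ∀ v, ∃ u, Ghat.Adj v u) :
    skewIter D (∅ : Set _) 1 ≠ Set.univ := by
  intro h
  set a0 : Fin m := ⟨0, by omega⟩ with ha0
  have hmem : (inl (inr a0) : (Fin m ⊕ Fin m) ⊕ (Fin r × Fin 2)) ∈ skewIter D (∅ : Set _) 1 :=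
    h ▸ Set.mem_univ _
  rw [skewIter_one] at hmem
  rcases mem_skewStep.1 hmem with hc | ⟨v, hadj, hu⟩
  · exact hc
  · match v with
    | inl (inl b) =>
      obtain ⟨u, hu'⟩ := hdeg b
      have h1 : (inl (inl u) : (Fin m ⊕ Fin m) ⊕ (Fin r × Fin 2)) = inl (inr a0) :=
        hu _ (by simpa using hu') (by simp)
      simp at h1
    | inl (inr b) =>
      rw [disjUnion_adj_inl_inl] at hadj
      exact absurd hadj (coronaK1_adj_inr_inr Ghat b a0)
    | inr p => exact absurd hadj (disjUnion_adj_inr_inl _ _ _ _)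

end Backward

section Forward

variable {V : Type*} {G : SimpleGraph V}

/-- leaf: vertex with exactly one neighbor -/
def IsLeaf (G : SimpleGraph V) (v : V) : Prop := ∃ u, G.Adj v u ∧ ∀ w, G.Adj v w → w = u

noncomputable def supp (G : SimpleGraph V) (v : V) : V :=
  letI := Classical.dec (IsLeaf G v)
  if h : IsLeaf G v then h.choose else v

lemma supp_adj {v : V} (h : IsLeaf G v) : G.Adj v (supp G v) := by
  rw [supp, dif_pos h]; exact h.choose_spec.1

lemma supp_eq {v w : V} (h : IsLeaf G v) (hw : G.Adj v w) : w = supp G v := by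
  rw [supp, dif_pos h]; exact h.choose_spec.2 w hw

noncomputable def lfn (G : SimpleGraph V) (b : V) : V :=
  letI := Classical.dec (∃ ℓ, IsLeaf G ℓ ∧ G.Adj b ℓ)
  if h : ∃ ℓ, IsLeaf G ℓ ∧ G.Adj b ℓ then h.choose else b

lemma lfn_spec {b : V} (h : ∃ ℓ, IsLeaf G ℓ ∧ G.Adj b ℓ) :
    IsLeaf G (lfn G b) ∧ G.Adj b (lfn G b) := by
  rw [lfn, dif_pos h]; exact h.choose_spec

lemma mem_iter1 {x : V} :
    x ∈ skewIter G (∅ : Set V) 1 ↔ ∃ v, IsLeaf G v ∧ G.Adj v x := by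
  rw [skewIter_one, mem_skewStep]
  constructor
  · rintro (h | ⟨v, hadj, hv⟩)
    · exact absurd h (Set.notMem_empty x)
    · exact ⟨v, ⟨x, hadj, fun w hw => hv w hw (Set.notMem_empty w)⟩, hadj⟩
  · rintro ⟨v, hleaf, hadj⟩
    refine Or.inr ⟨v, hadj, fun u hu _ => ?_⟩
    rw [supp_eq hleaf hu, ← supp_eq hleaf hadj]

lemma mem_iter2' {x : V} (h2 : skewIter G (∅ : Set V) 2 = Set.univ) :
    x ∈ skewStep G (skewIter G (∅ : Set V) 1) := by
  have h : skewStep G (skewIter G (∅ : Set V) 1) = skewIter G (∅ : Set V) 2 := rfl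
  rw [h, h2]; exact Set.mem_univ x

/-- a leaf whose support is not a leaf is white after round 1 -/
lemma leaf_not_mem_iter1 {ℓ : V} (hℓ : IsLeaf G ℓ) (hs : ¬ IsLeaf G (supp G ℓ)) :
    ℓ ∉ skewIter G (∅ : Set V) 1 := by
  rw [mem_iter1]
  rintro ⟨w, hw, hwℓ⟩
  have : w = supp G ℓ := supp_eq hℓ hwℓ.symm
  exact hs (this ▸ hw)

/-- Every non-leaf vertex has a leaf neighbor. -/
lemma nonleaf_nbr (h2 : skewIter G (∅ : Set V) 2 = Set.univ) {b : V} (hb : ¬ IsLeaf G b) :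
    ∃ ℓ, IsLeaf G ℓ ∧ G.Adj b ℓ := by
  by_contra hno
  push_neg at hno
  have hbB1 : b ∉ skewIter G (∅ : Set V) 1 := by
    rw [mem_iter1]; rintro ⟨v, hv, hadj⟩; exact hno v hv hadj.symm
  have key : ∀ z : V, ¬ IsLeaf G z → (∀ ℓ, IsLeaf G ℓ → ¬ G.Adj z ℓ) →
      ∃ v, G.Adj v z ∧ (¬ IsLeaf G v) ∧ v ∉ skewIter G (∅ : Set V) 1 ∧
        (∀ u, G.Adj v u → u ∉ skewIter G (∅ : Set V) 1 → u = z) := by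
    intro z hz hzno
    have hzB1 : z ∉ skewIter G (∅ : Set V) 1 := by
      rw [mem_iter1]; rintro ⟨v, hv, hadj⟩; exact hzno v hv hadj.symm
    rcases mem_skewStep.1 (mem_iter2' (x := z) h2) with hc | ⟨v, hadj, hforce⟩
    · exact absurd hc hzB1
    have hvleaf : ¬ IsLeaf G v := by
      intro hv
      exact hzno v hv hadj.symm
    have hvB1 : v ∉ skewIter G (∅ : Set V) 1 := by
      intro hvB
      rw [mem_iter1] at hvB
      obtain ⟨ℓ, hℓ, hℓv⟩ := hvB
      have hsup : v = supp G ℓ := supp_eq hℓ hℓv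
      have hℓB1 : ℓ ∉ skewIter G (∅ : Set V) 1 :=
        leaf_not_mem_iter1 hℓ (by rw [← hsup]; exact hvleaf)
      have heq := hforce ℓ hℓv.symm hℓB1
      exact hz (heq ▸ hℓ)
    exact ⟨v, hadj, hvleaf, hvB1, hforce⟩
  obtain ⟨v, hvb, hvleaf, hvB1, hforceV⟩ := key b hb hno
  have hvno : ∀ ℓ, IsLeaf G ℓ → ¬ G.Adj v ℓ := by
    intro ℓ hℓ hadj
    exact hvB1 (mem_iter1.2 ⟨ℓ, hℓ, hadj.symm⟩)
  obtain ⟨v2, hv2v, hv2leaf, hv2B1, hforceV2⟩ := key v hvleaf hvno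
  have hv2b : b = v2 := (hforceV v2 hv2v.symm hv2B1).symm
  subst hv2b
  have hex : ∃ u, G.Adj b u ∧ u ≠ v := by
    by_contra hcon
    push_neg at hcon
    exact hb ⟨v, hv2v, hcon⟩
  obtain ⟨u, hbu, huv⟩ := hex
  have huB1 : u ∈ skewIter G (∅ : Set V) 1 := by
    by_contra huB
    exact huv (hforceV2 u hbu huB)
  rw [mem_iter1] at huB1
  obtain ⟨ℓ', hℓ', hℓ'u⟩ := huB1
  have huleaf : ¬ IsLeaf G u := fun h => hno u h hbu
  have hsup : u = supp G ℓ' := supp_eq hℓ' hℓ'u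
  have hℓ'B1 : ℓ' ∉ skewIter G (∅ : Set V) 1 :=
    leaf_not_mem_iter1 hℓ' (by rw [← hsup]; exact huleaf)
  rcases mem_skewStep.1 (mem_iter2' (x := ℓ') h2) with hc | ⟨v3, hadj3, hforce3⟩
  · exact absurd hc hℓ'B1
  have hv3 : v3 = supp G ℓ' := supp_eq hℓ' hadj3.symm
  have hbℓ' : b = ℓ' := hforce3 b (by rw [hv3, ← hsup]; exact hbu.symm) hbB1
  exact hb (hbℓ' ▸ hℓ')

/-- A non-leaf vertex has at most one leaf neighbor. -/
lemma leaf_nbr_unique (h2 : skewIter G (∅ : Set V) 2 = Set.univ) {b ℓ1 ℓ2 : V}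
    (hb : ¬ IsLeaf G b) (h1 : IsLeaf G ℓ1) (ha1 : G.Adj b ℓ1)
    (hl2 : IsLeaf G ℓ2) (ha2 : G.Adj b ℓ2) : ℓ1 = ℓ2 := by
  have notB1 : ∀ ℓ, IsLeaf G ℓ → G.Adj b ℓ → ℓ ∉ skewIter G (∅ : Set V) 1 := by
    intro ℓ hℓ haℓ
    refine leaf_not_mem_iter1 hℓ ?_
    rw [← supp_eq hℓ haℓ.symm]
    exact hb
  rcases mem_skewStep.1 (mem_iter2' (x := ℓ1) h2) with hc | ⟨v, hadj, hforce⟩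
  · exact absurd hc (notB1 ℓ1 h1 ha1)
  have hvb : v = supp G ℓ1 := supp_eq h1 hadj.symm
  have hb' : b = supp G ℓ1 := supp_eq h1 ha1.symm
  exact (hforce ℓ2 (by rw [hvb, ← hb']; exact ha2) (notB1 ℓ2 hl2 ha2)).symm

end Forward

section Construct

variable {V : Type*} (G : SimpleGraph V)

noncomputable def gmap {m r : ℕ} (f1 : Fin m → V) (f2 : Fin r → V) :
    (Fin m ⊕ Fin m) ⊕ (Fin r × Fin 2) → V := fun x =>
  match x with
  | inl (inl i) => f1 i
  | inl (inr i) => lfn G (f1 i)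
  | inr (j, k) => if k = 0 then f2 j else supp G (f2 j)

variable {m r : ℕ} (f1 : Fin m → V) (f2 : Fin r → V)

@[simp] lemma gmap_11 (i : Fin m) : gmap G f1 f2 (inl (inl i)) = f1 i := rfl
@[simp] lemma gmap_12 (i : Fin m) : gmap G f1 f2 (inl (inr i)) = lfn G (f1 i) := rfl
@[simp] lemma gmap_20 (j : Fin r) : gmap G f1 f2 (inr (j, 0)) = f2 j := by
  show (if (0 : Fin 2) = 0 then f2 j else supp G (f2 j)) = f2 j
  exact if_pos rfl
@[simp] lemma gmap_21 (j : Fin r) : gmap G f1 f2 (inr (j, 1)) = supp G (f2 j) := by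
  show (if (1 : Fin 2) = 0 then f2 j else supp G (f2 j)) = supp G (f2 j)
  exact if_neg (by decide)

end Construct

lemma forward {V : Type*} [Fintype V] (G : SimpleGraph V)
    (h2 : skewIter G (∅ : Set V) 2 = Set.univ)
    (h1 : skewIter G (∅ : Set V) 1 ≠ Set.univ) :
    ∃ (m r : ℕ) (Ghat : SimpleGraph (Fin m)), 2 ≤ m ∧ (∀ v, ∃ u, Ghat.Adj v u) ∧
      Nonempty (G ≃g disjUnion (coronaK1 Ghat) (rK2 r)) := by
  classical
  -- basic facts
  have hlfn : ∀ b : V, ¬ IsLeaf G b → IsLeaf G (lfn G b) ∧ G.Adj b (lfn G b) :=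
    fun b hb => lfn_spec (nonleaf_nbr h2 hb)
  have hlfn_uniq : ∀ b ℓ, ¬ IsLeaf G b → IsLeaf G ℓ → G.Adj b ℓ → ℓ = lfn G b :=
    fun b ℓ hb hℓ ha =>
      leaf_nbr_unique h2 hb hℓ ha (hlfn b hb).1 (hlfn b hb).2
  have hsupp_lfn : ∀ b, ¬ IsLeaf G b → supp G (lfn G b) = b := fun b hb =>
    (supp_eq (hlfn b hb).1 (hlfn b hb).2.symm).symm
  have hsupp_supp : ∀ k, IsLeaf G k → IsLeaf G (supp G k) → supp G (supp G k) = k :=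
    fun k hk hsk => (supp_eq hsk (supp_adj hk).symm).symm
  have hsecond : ∀ b, ¬ IsLeaf G b → ∃ u, G.Adj b u ∧ ¬ IsLeaf G u := by
    intro b hb
    obtain ⟨hl, hadj⟩ := hlfn b hb
    by_contra hcon
    push_neg at hcon
    exact hb ⟨lfn G b, hadj, fun w hw => hlfn_uniq b w hb (hcon w hw) hw⟩
  -- the type of non-leaves and the type of chosen K₂-representatives
  let eV : V ≃ Fin (Fintype.card V) := Fintype.equivFin V
  let NLt := {v : V // ¬ IsLeaf G v}
  let Rt := {v : V // (IsLeaf G v ∧ IsLeaf G (supp G v)) ∧ eV v < eV (supp G v)}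
  haveI : Fintype NLt := Fintype.ofFinite _
  haveI : Fintype Rt := Fintype.ofFinite _
  set m := Fintype.card NLt with hm
  set r := Fintype.card Rt with hr
  let e₁ : NLt ≃ Fin m := Fintype.equivFin NLt
  let e₂ : Rt ≃ Fin r := Fintype.equivFin Rt
  -- m ≥ 2
  obtain ⟨x0, hx0⟩ := (Set.ne_univ_iff_exists_notMem _).1 h1
  have hx0leaf : IsLeaf G x0 := by
    by_contra hxl
    obtain ⟨ℓ, hℓ, ha⟩ := nonleaf_nbr h2 hxl
    exact hx0 (mem_iter1.2 ⟨ℓ, hℓ, ha.symm⟩)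
  have hb0 : ¬ IsLeaf G (supp G x0) := by
    intro hs
    exact hx0 (mem_iter1.2 ⟨supp G x0, hs, (supp_adj hx0leaf).symm⟩)
  obtain ⟨u0, hadj0, hu0⟩ := hsecond _ hb0
  have hm2 : 2 ≤ m := by
    rw [hm]
    refine Fintype.one_lt_card_iff_nontrivial.2 ⟨⟨supp G x0, hb0⟩, ⟨u0, hu0⟩, ?_⟩
    intro h
    have : supp G x0 = u0 := congrArg Subtype.val h
    exact hadj0.ne this
  -- the graph Ghat
  let Ghat : SimpleGraph (Fin m) :=
    { Adj := fun i j => G.Adj (e₁.symm i : V) (e₁.symm j : V)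
      symm := ⟨fun i j (h : G.Adj (e₁.symm i : V) (e₁.symm j : V)) => h.symm⟩
      loopless := ⟨fun i (h : G.Adj (e₁.symm i : V) (e₁.symm i : V)) => G.irrefl h⟩ }
  have hdeg : ∀ i : Fin m, ∃ j, Ghat.Adj i j := by
    intro i
    obtain ⟨u, hadj, hu⟩ := hsecond (e₁.symm i : V) (e₁.symm i).2
    refine ⟨e₁ ⟨u, hu⟩, ?_⟩
    show G.Adj (e₁.symm i : V) (e₁.symm (e₁ ⟨u, hu⟩) : V)
    rw [Equiv.symm_apply_apply]
    exact hadj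
  -- the bijection
  let g := gmap G (fun i => (e₁.symm i : V)) (fun j => (e₂.symm j : V))
  have g11 : ∀ i, g (inl (inl i)) = (e₁.symm i : V) := fun i => rfl
  have g12 : ∀ i, g (inl (inr i)) = lfn G (e₁.symm i : V) := fun i => rfl
  have g20 : ∀ j, g (inr (j, 0)) = (e₂.symm j : V) := fun j => gmap_20 _ _ _ _
  have g21 : ∀ j, g (inr (j, 1)) = supp G (e₂.symm j : V) := fun j => gmap_21 _ _ _ _
  have hRKL : ∀ z : Rt, IsLeaf G (z : V) ∧ IsLeaf G (supp G (z : V)) := fun z => z.2.1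
  have hRlt : ∀ z : Rt, eV (z : V) < eV (supp G (z : V)) := fun z => z.2.2
  have hsuppR : ∀ z : Rt, supp G (supp G (z : V)) = (z : V) :=
    fun z => hsupp_supp _ z.2.1.1 z.2.1.2
  -- class membership of g-values
  have hc2 : ∀ i : Fin m, IsLeaf G (lfn G (e₁.symm i : V)) ∧
      ¬ IsLeaf G (supp G (lfn G (e₁.symm i : V))) := by
    intro i
    refine ⟨(hlfn _ (e₁.symm i).2).1, ?_⟩
    rw [hsupp_lfn _ (e₁.symm i).2]
    exact (e₁.symm i).2
  have hKLg : ∀ (j : Fin r) (k : Fin 2),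
      IsLeaf G (g (inr (j, k))) ∧ IsLeaf G (supp G (g (inr (j, k)))) := by
    intro j k
    rcases fin2_cases k with rfl | rfl
    · rw [g20]
      exact ⟨(hRKL _).1, (hRKL _).2⟩
    · rw [g21]
      refine ⟨(hRKL _).2, ?_⟩
      rw [hsuppR]
      exact (hRKL _).1
  have hinj : Function.Injective g := by
    intro x y hxy
    obtain (i | i) | ⟨j, k⟩ := x <;> obtain (i' | i') | ⟨j', k'⟩ := y
    · -- 11 11
      rw [g11, g11] at hxy
      rw [e₁.symm.injective (Subtype.coe_injective hxy)]
    · -- 11 12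
      rw [g11, g12] at hxy
      exact absurd (hc2 i').1 (hxy ▸ (e₁.symm i).2)
    · -- 11 2
      rw [g11] at hxy
      exact absurd (hxy ▸ (hKLg j' k').1) ((e₁.symm i).2)
    · -- 12 11
      rw [g12, g11] at hxy
      exact absurd (hc2 i).1 (hxy.symm ▸ (e₁.symm i').2)
    · -- 12 12
      rw [g12, g12] at hxy
      have := congrArg (supp G) hxy
      rw [hsupp_lfn _ (e₁.symm i).2, hsupp_lfn _ (e₁.symm i').2] at this
      rw [e₁.symm.injective (Subtype.coe_injective this)]
    · -- 12 2
      rw [g12] at hxy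
      exact absurd (hxy ▸ (hKLg j' k').2) (hc2 i).2
    · -- 2 11
      rw [g11] at hxy
      exact absurd (hxy ▸ (hKLg j k).1) ((e₁.symm i').2)
    · -- 2 12
      rw [g12] at hxy
      exact absurd (hxy ▸ (hKLg j k).2) (hc2 i').2
    · -- 2 2
      rcases fin2_cases k with rfl | rfl <;> rcases fin2_cases k' with rfl | rfl
      · rw [g20, g20] at hxy
        rw [e₂.symm.injective (Subtype.coe_injective hxy)]
      · rw [g20, g21] at hxy
        exfalso
        have h1' := hRlt (e₂.symm j)
        have h2' := hRlt (e₂.symm j')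
        rw [← hxy] at h2'
        have h3 : supp G (e₂.symm j : V) = (e₂.symm j' : V) := by
          have := congrArg (supp G) hxy
          rwa [hsuppR] at this
        rw [h3] at h1'
        exact absurd h2' (lt_asymm h1')
      · rw [g21, g20] at hxy
        exfalso
        have h1' := hRlt (e₂.symm j)
        have h2' := hRlt (e₂.symm j')
        rw [hxy] at h1'
        have h3 : supp G (e₂.symm j' : V) = (e₂.symm j : V) := by
          have := congrArg (supp G) hxy.symm
          rwa [hsuppR] at this
        rw [h3] at h2'
        exact absurd h2' (lt_asymm h1')
      · rw [g21, g21] at hxy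
        have := congrArg (supp G) hxy
        rw [hsuppR, hsuppR] at this
        rw [e₂.symm.injective (Subtype.coe_injective this)]
  have hsurj : Function.Surjective g := by
    intro v
    by_cases hv : IsLeaf G v
    · by_cases hsv : IsLeaf G (supp G v)
      · by_cases hR : eV v < eV (supp G v)
        · refine ⟨inr (e₂ ⟨v, ⟨⟨hv, hsv⟩, hR⟩⟩, 0), ?_⟩
          rw [g20, Equiv.symm_apply_apply]
        · have hne : supp G v ≠ v := (supp_adj hv).ne'
          have hR' : eV (supp G v) < eV (supp G (supp G v)) := by
            rw [hsupp_supp v hv hsv]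
            exact lt_of_le_of_ne (le_of_not_gt hR) (fun h => hne (eV.injective h))
          have hmem : (IsLeaf G (supp G v) ∧ IsLeaf G (supp G (supp G v))) ∧
              eV (supp G v) < eV (supp G (supp G v)) := by
            refine ⟨⟨hsv, ?_⟩, hR'⟩
            rw [hsupp_supp v hv hsv]
            exact hv
          refine ⟨inr (e₂ ⟨supp G v, hmem⟩, 1), ?_⟩
          rw [g21, Equiv.symm_apply_apply]
          exact hsupp_supp v hv hsv
      · refine ⟨inl (inr (e₁ ⟨supp G v, hsv⟩)), ?_⟩
        rw [g12, Equiv.symm_apply_apply]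
        exact (hlfn_uniq (supp G v) v hsv hv (supp_adj hv).symm).symm
    · exact ⟨inl (inl (e₁ ⟨v, hv⟩)), by rw [g11, Equiv.symm_apply_apply]⟩
  -- adjacency correspondence
  have hAdjLeaf : ∀ ℓ w : V, IsLeaf G ℓ → (G.Adj ℓ w ↔ w = supp G ℓ) :=
    fun ℓ w hℓ => ⟨supp_eq hℓ, fun h => h ▸ supp_adj hℓ⟩
  have hcross : ∀ (w : V) (j : Fin r) (k : Fin 2),
      (¬ IsLeaf G w ∨ ¬ IsLeaf G (supp G w)) → ¬ G.Adj w (g (inr (j, k))) := by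
    intro w j k hw hadj
    obtain ⟨hz1, hz2⟩ := hKLg j k
    have : w = supp G (g (inr (j, k))) := supp_eq hz1 hadj.symm
    rcases hw with hw | hw
    · exact hw (this ▸ hz2)
    · rw [this] at hw
      rw [hsupp_supp _ hz1 hz2] at hw
      exact hw hz1
  have hadjiff : ∀ x y, G.Adj (g x) (g y) ↔
      (disjUnion (coronaK1 Ghat) (rK2 r)).Adj x y := by
    intro x y
    obtain (i | i) | ⟨j, k⟩ := x <;> obtain (i' | i') | ⟨j', k'⟩ := y
    · -- 11 11
      rw [g11, g11, disjUnion_adj_inl_inl, coronaK1_adj_inl_inl]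
    · -- 11 12
      rw [g11, g12, disjUnion_adj_inl_inl, coronaK1_adj_inl_inr]
      constructor
      · intro h
        have hb : (e₁.symm i : V) = supp G (lfn G (e₁.symm i' : V)) :=
          supp_eq (hc2 i').1 h.symm
        rw [hsupp_lfn _ (e₁.symm i').2] at hb
        exact e₁.symm.injective (Subtype.coe_injective hb)
      · rintro rfl
        exact (hlfn _ (e₁.symm i).2).2
    · -- 11 2
      constructor
      · intro h
        exact absurd h (by
          rw [g11]
          exact hcross _ j' k' (Or.inl (e₁.symm i).2))
      · intro h
        exact absurd h (disjUnion_adj_inl_inr _ _ _ _)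
    · -- 12 11
      rw [g12, g11, disjUnion_adj_inl_inl, coronaK1_adj_inr_inl]
      constructor
      · intro h
        have hb : (e₁.symm i' : V) = supp G (lfn G (e₁.symm i : V)) :=
          supp_eq (hc2 i).1 h
        rw [hsupp_lfn _ (e₁.symm i).2] at hb
        exact e₁.symm.injective (Subtype.coe_injective hb)
      · rintro rfl
        exact (hlfn _ (e₁.symm i').2).2.symm
    · -- 12 12
      constructor
      · intro h
        rw [g12, g12] at h
        exfalso
        have hb : lfn G (e₁.symm i' : V) = supp G (lfn G (e₁.symm i : V)) :=
          supp_eq (hc2 i).1 h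
        rw [hsupp_lfn _ (e₁.symm i).2] at hb
        exact absurd ((hc2 i').1) (hb ▸ (e₁.symm i).2)
      · intro h
        rw [disjUnion_adj_inl_inl] at h
        exact absurd h (coronaK1_adj_inr_inr _ _ _)
    · -- 12 2
      constructor
      · intro h
        rw [g12] at h
        exact absurd h (hcross _ j' k' (Or.inr (by
          rw [hsupp_lfn _ (e₁.symm i).2]
          exact (e₁.symm i).2)))
      · intro h
        exact absurd h (disjUnion_adj_inl_inr _ _ _ _)
    · -- 2 11
      constructor
      · intro h
        rw [g11] at h
        exact absurd h.symm (hcross _ j k (Or.inl (e₁.symm i').2))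
      · intro h
        exact absurd h (disjUnion_adj_inr_inl _ _ _ _)
    · -- 2 12
      constructor
      · intro h
        rw [g12] at h
        exact absurd h.symm (hcross _ j k (Or.inr (by
          rw [hsupp_lfn _ (e₁.symm i').2]
          exact (e₁.symm i').2)))
      · intro h
        exact absurd h (disjUnion_adj_inr_inl _ _ _ _)
    · -- 2 2
      rw [disjUnion_adj_inr_inr, rK2_adj]
      rcases fin2_cases k with rfl | rfl <;> rcases fin2_cases k' with rfl | rfl
      · rw [g20, g20]
        constructor
        · intro h
          exfalso
          have hb : (e₂.symm j' : V) = supp G (e₂.symm j : V) :=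
            supp_eq (hRKL _).1 h
          have h1' := hRlt (e₂.symm j)
          have h2' := hRlt (e₂.symm j')
          rw [hb, hsuppR] at h2'
          exact absurd h2' (lt_asymm h1')
        · rintro ⟨-, hk⟩
          exact absurd rfl hk
      · rw [g20, g21]
        constructor
        · intro h
          have hb : supp G (e₂.symm j' : V) = supp G (e₂.symm j : V) :=
            supp_eq (hRKL _).1 h
          have := congrArg (supp G) hb
          rw [hsuppR, hsuppR] at this
          have hji : j' = j := by
            have h4 := congrArg e₂ (Subtype.coe_injective this)
            rwa [Equiv.apply_symm_apply, Equiv.apply_symm_apply] at h4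
          exact ⟨hji.symm, (by decide : (0 : Fin 2) ≠ 1)⟩
        · rintro ⟨hj, -⟩
          have hj' : j = j' := hj
          subst hj'
          exact supp_adj (hRKL (e₂.symm j)).1
      · rw [g21, g20]
        constructor
        · intro h
          have hb : (e₂.symm j' : V) = supp G (supp G (e₂.symm j : V)) :=
            supp_eq (hRKL _).2 h
          rw [hsuppR] at hb
          have := Subtype.coe_injective hb
          exact ⟨(e₂.symm.injective this).symm, (by decide : (1 : Fin 2) ≠ 0)⟩
        · rintro ⟨hj, -⟩
          have hj' : j = j' := hj
          subst hj'
          exact (supp_adj (hRKL (e₂.symm j)).1).symm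
      · rw [g21, g21]
        constructor
        · intro h
          exfalso
          have hb : supp G (e₂.symm j' : V) = supp G (supp G (e₂.symm j : V)) :=
            supp_eq (hRKL _).2 h
          rw [hsuppR] at hb
          have hz' : (e₂.symm j' : V) = supp G (e₂.symm j : V) := by
            have := congrArg (supp G) hb
            rwa [hsuppR] at this
          have h2' := hRlt (e₂.symm j')
          rw [hb] at h2'
          have h1' := hRlt (e₂.symm j)
          rw [← hz'] at h1'
          exact absurd h2' (lt_asymm h1')
        · rintro ⟨-, hk⟩
          exact absurd rfl hk
  let E : ((Fin m ⊕ Fin m) ⊕ (Fin r × Fin 2)) ≃ V := Equiv.ofBijective g ⟨hinj, hsurj⟩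
  have hiso : (disjUnion (coronaK1 Ghat) (rK2 r)) ≃g G :=
    { toEquiv := E
      map_rel_iff' := @fun x y => hadjiff x y }
  exact ⟨m, r, Ghat, hm2, hdeg, ⟨hiso.symm⟩⟩

end SkewAux
/-- `th₋(G) = th₋(G,0) = 2` iff `G ≅ (Ĝ ∘ K₁) ⊔ rK₂` where `Ĝ` has
order at least two and every component of `Ĝ` has an edge. -/
theorem skewTh_eq_two_of_empty_set_iff {V : Type*} [Fintype V] (G : SimpleGraph V) :
    (skewTh G = 2 ∧ skewThK G 0 = 2) ↔
      ∃ (m r : ℕ) (Ghat : SimpleGraph (Fin m)),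
        2 ≤ m ∧ (∀ v, ∃ u, Ghat.Adj v u) ∧
        Nonempty (G ≃g disjUnion (coronaK1 Ghat) (rK2 r)) := by
  classical
  constructor
  · rintro ⟨-, hk⟩
    rw [skewThK] at hk
    have hne : {n | ∃ S : Set V, IsSkewZFS G S ∧ S.ncard = 0 ∧
        n = S.ncard + skewPt G S}.Nonempty := by
      by_contra h
      rw [Set.not_nonempty_iff_eq_empty] at h
      rw [h, Nat.sInf_empty] at hk
      exact two_ne_zero hk.symm
    have h2mem := hk ▸ Nat.sInf_mem hne
    obtain ⟨S, hS, hcard, heq⟩ := h2mem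
    have hSempty : S = ∅ := (Set.ncard_eq_zero (Set.toFinite S)).1 hcard
    subst hSempty
    rw [Set.ncard_empty, zero_add] at heq
    have hQne : {n | skewIter G (∅ : Set V) n = Set.univ}.Nonempty := hS
    rw [skewPt] at heq
    have h2' : skewIter G (∅ : Set V) 2 = Set.univ := by
      have h := Nat.sInf_mem hQne
      rw [← heq] at h
      exact h
    have h1' : skewIter G (∅ : Set V) 1 ≠ Set.univ := by
      intro h
      have hle : sInf {n | skewIter G (∅ : Set V) n = Set.univ} ≤ 1 := Nat.sInf_le h
      omega
    exact SkewAux.forward G h2' h1'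
  · rintro ⟨m, r, Ghat, hm, hdeg, ⟨e⟩⟩
    have hD2 := SkewAux.backward_iter2 (r := r) Ghat hdeg
    have hD1 := SkewAux.backward_iter1 (r := r) Ghat hm hdeg
    have h2' : skewIter G (∅ : Set V) 2 = Set.univ := (SkewAux.skewIter_iso e 2).2 hD2
    have h1' : skewIter G (∅ : Set V) 1 ≠ Set.univ :=
      fun h => hD1 ((SkewAux.skewIter_iso e 1).1 h)
    have h0' : skewIter G (∅ : Set V) 0 ≠ Set.univ := by
      intro h
      exact h1' (SkewAux.skewIter_univ_succ h)
    have hZ : IsSkewZFS G ∅ := ⟨2, h2'⟩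
    have hpt : skewPt G (∅ : Set V) = 2 := by
      rw [skewPt]
      have hQne : Set.Nonempty {n | skewIter G (∅ : Set V) n = Set.univ} := ⟨2, h2'⟩
      have hmem := Nat.sInf_mem hQne
      have hle : sInf {n | skewIter G (∅ : Set V) n = Set.univ} ≤ 2 := Nat.sInf_le h2'
      set q := sInf {n | skewIter G (∅ : Set V) n = Set.univ} with hq
      rcases (by omega : q = 0 ∨ q = 1 ∨ q = 2) with h | h | h
      · rw [h] at hmem; exact absurd hmem h0'
      · rw [h] at hmem; exact absurd hmem h1'
      · exact h
    have hthk : skewThK G 0 = 2 := by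
      rw [skewThK]
      have hPeq : {n | ∃ S : Set V, IsSkewZFS G S ∧ S.ncard = 0 ∧
          n = S.ncard + skewPt G S} = {2} := by
        ext n
        simp only [Set.mem_setOf_eq, Set.mem_singleton_iff]
        constructor
        · rintro ⟨S, hS, hc, rfl⟩
          have hSe : S = ∅ := (Set.ncard_eq_zero (Set.toFinite S)).1 hc
          subst hSe
          rw [Set.ncard_empty, zero_add, hpt]
        · rintro rfl
          exact ⟨∅, hZ, Set.ncard_empty V, by rw [Set.ncard_empty, zero_add, hpt]⟩
      rw [hPeq, csInf_singleton]
    have hV2 : Nontrivial V := by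
      refine ⟨e.symm (Sum.inl (Sum.inl ⟨0, by omega⟩)), e.symm (Sum.inl (Sum.inl ⟨1, by omega⟩)), ?_⟩
      intro h
      have := e.symm.injective h
      simp [Fin.ext_iff] at this
    have hth : skewTh G = 2 := by
      rw [skewTh]
      have h2mem : 2 ∈ {n | ∃ S : Set V, IsSkewZFS G S ∧ n = S.ncard + skewPt G S} :=
        ⟨∅, hZ, by rw [Set.ncard_empty, zero_add, hpt]⟩
      have hlb : ∀ n ∈ {n | ∃ S : Set V, IsSkewZFS G S ∧ n = S.ncard + skewPt G S},
          2 ≤ n := by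
        rintro n ⟨S, hS, rfl⟩
        by_contra hlt
        push_neg at hlt
        rcases Nat.eq_zero_or_pos (skewPt G S) with hpt0 | hptpos
        · have hQS : {n | skewIter G S n = Set.univ}.Nonempty := hS
          have hmem := Nat.sInf_mem hQS
          rw [skewPt] at hpt0
          rw [hpt0] at hmem
          have hSuniv : S = Set.univ := hmem
          rw [hSuniv, Set.ncard_univ] at hlt
          have hcard2 : 1 < Nat.card V := Finite.one_lt_card_iff_nontrivial.2 hV2
          omega
        · have hc : S.ncard = 0 := by omega
          have hSe : S = ∅ := (Set.ncard_eq_zero (Set.toFinite S)).1 hc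
          subst hSe
          rw [hpt] at hlt
          omega
      exact le_antisymm (Nat.sInf_le h2mem) (hlb _ (Nat.sInf_mem ⟨2, h2mem⟩))
    exact ⟨hth, hthk⟩
end

section
/- A simple graph G satisfies th_-(G) = th_-(G,1) = 2 if and only if G is isomorphic to H(s,t) ⊔ rK_2 for some integers r, s, t ≥ 0 with r + s + t ≥ 1; in this case the order of G is odd. -/
open SimpleGraph

set_option linter.unusedSectionVars false


lemma fin2cases (j : Fin 2) : j = 0 ∨ j = 1 := by revert j; decide

lemma fin2ne {j a b : Fin 2} (ha : a ≠ j) (hb : b ≠ j) : a = b := by revert j a b; decide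

lemma exists_pairing {α : Type*} [Fintype α] (f : α → α)
    (hinv : ∀ a, f (f a) = a) (hne : ∀ a, f a ≠ a) :
    ∃ (n : ℕ) (e : α ≃ Fin n × Fin 2), ∀ i : Fin n, e.symm (i, 1) = f (e.symm (i, 0)) := by
  classical
  let st : Setoid α := ⟨fun a c => c = a ∨ c = f a, by
    constructor
    · exact fun a => Or.inl rfl
    · rintro a c (rfl | rfl)
      · exact Or.inl rfl
      · exact Or.inr (hinv a).symm
    · rintro a c d (rfl | rfl) (rfl | rfl)
      · exact Or.inl rfl
      · exact Or.inr rfl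
      · exact Or.inr rfl
      · rw [hinv]; exact Or.inl rfl⟩
  let Q := Quotient st
  haveI : Fintype Q := Fintype.ofFinite Q
  let g : Q × Fin 2 → α := fun p => if p.2 = 0 then p.1.out else f p.1.out
  have hmkg : ∀ p : Q × Fin 2, Quotient.mk st (g p) = p.1 := by
    rintro ⟨q, j⟩
    have : st.r (q.out) (g (q, j)) := by
      rcases fin2cases j with rfl | rfl
      · exact Or.inl rfl
      · exact Or.inr rfl
    calc Quotient.mk st (g (q,j)) = Quotient.mk st q.out := (Quotient.sound this).symm
    _ = q := q.out_eq
  have hg : Function.Bijective g := by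
    constructor
    · rintro ⟨q, j⟩ ⟨q', j'⟩ h
      have hq : q = q' := by have h1 := hmkg (q, j); have h2 := hmkg (q', j'); simp only [] at h1 h2; rw [← h1, ← h2, h]
      subst hq
      rcases fin2cases j with rfl | rfl <;> rcases fin2cases j' with rfl | rfl
      · rfl
      · exact absurd h.symm (by simpa [g] using hne q.out)
      · exact absurd h (by simpa [g] using hne q.out)
      · rfl
    · intro a
      have h : st.r (Quotient.mk st a).out a := Quotient.exact ((Quotient.mk st a).out_eq)
      rcases h with h | h
      · exact ⟨(Quotient.mk st a, 0), by simp [g, h.symm]⟩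
      · exact ⟨(Quotient.mk st a, 1), by simp [g, h.symm]⟩
  let e0 : Q × Fin 2 ≃ α := Equiv.ofBijective g hg
  let eQ : Q ≃ Fin (Fintype.card Q) := Fintype.equivFin Q
  refine ⟨Fintype.card Q, (((eQ.symm.prodCongr (Equiv.refl (Fin 2))).trans e0)).symm, fun i => ?_⟩
  simp only [Equiv.symm_symm, Equiv.trans_apply, Equiv.prodCongr_apply, Equiv.coe_refl,
    Prod.map_apply, id_eq]
  show e0 (eQ.symm i, 1) = f (e0 (eQ.symm i, 0))
  show g (eQ.symm i, 1) = f (g (eQ.symm i, 0))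
  simp [g]

section TargetAdj
variable {α β : Type*} (A : SimpleGraph α) (B : SimpleGraph β) (s t r : ℕ)

lemma disjUnion_adj_inl (u v : α) : (disjUnion A B).Adj (.inl u) (.inl v) ↔ A.Adj u v := by
  constructor
  · rintro ⟨hne, h | h⟩
    · exact h
    · exact h.symm
  · intro h
    exact ⟨by simp [h.ne], Or.inl h⟩

lemma disjUnion_adj_inr (u v : β) : (disjUnion A B).Adj (.inr u) (.inr v) ↔ B.Adj u v := by
  constructor
  · rintro ⟨hne, h | h⟩
    · exact h
    · exact h.symm
  · intro h
    exact ⟨by simp [h.ne], Or.inl h⟩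

lemma disjUnion_not_adj_inl_inr (u : α) (v : β) : ¬ (disjUnion A B).Adj (.inl u) (.inr v) := by
  rintro ⟨hne, h | h⟩ <;> exact h

lemma disjUnion_not_adj_inr_inl (u : β) (v : α) : ¬ (disjUnion A B).Adj (.inr u) (.inl v) := by
  rintro ⟨hne, h | h⟩ <;> exact h

lemma rK2_adj_s2 (p q : Fin r × Fin 2) : (rK2 r).Adj p q ↔ p.1 = q.1 ∧ p.2 ≠ q.2 := by
  constructor
  · rintro ⟨hne, h | h⟩
    · exact ⟨h, fun h2 => hne (Prod.ext h h2)⟩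
    · exact ⟨h.symm, fun h2 => hne (Prod.ext h.symm h2)⟩
  · rintro ⟨h1, h2⟩
    exact ⟨fun h => h2 (by rw [h]), Or.inl h1⟩

lemma Hgraph_adj_hub_x (p : Fin s × Fin 2) :
    (Hgraph s t).Adj (.inl ()) (.inr (.inl p)) ↔ p.2 = 0 := by
  constructor
  · rintro ⟨hne, h | h⟩
    · exact h
    · exact h.elim
  · intro h
    exact ⟨by simp, Or.inl h⟩

lemma Hgraph_adj_hub_t (p : Fin t × Fin 2) :
    (Hgraph s t).Adj (.inl ()) (.inr (.inr p)) := ⟨by simp, Or.inl trivial⟩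

lemma Hgraph_adj_x_x (p q : Fin s × Fin 2) :
    (Hgraph s t).Adj (.inr (.inl p)) (.inr (.inl q)) ↔ p.1 = q.1 ∧ p.2 ≠ q.2 := by
  constructor
  · rintro ⟨hne, h | h⟩
    · exact ⟨h, fun h2 => hne (by rw [Prod.ext h h2])⟩
    · exact ⟨h.symm, fun h2 => hne (by rw [Prod.ext h.symm h2])⟩
  · rintro ⟨h1, h2⟩
    exact ⟨fun h => h2 (by injection h with h; injection h with h; rw [h]), Or.inl h1⟩

lemma Hgraph_adj_t_t (p q : Fin t × Fin 2) :
    (Hgraph s t).Adj (.inr (.inr p)) (.inr (.inr q)) ↔ p.1 = q.1 ∧ p.2 ≠ q.2 := by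
  constructor
  · rintro ⟨hne, h | h⟩
    · exact ⟨h, fun h2 => hne (by rw [Prod.ext h h2])⟩
    · exact ⟨h.symm, fun h2 => hne (by rw [Prod.ext h.symm h2])⟩
  · rintro ⟨h1, h2⟩
    exact ⟨fun h => h2 (by injection h with h; injection h with h; rw [h]), Or.inl h1⟩

lemma Hgraph_not_adj_x_t (p : Fin s × Fin 2) (q : Fin t × Fin 2) :
    ¬ (Hgraph s t).Adj (.inr (.inl p)) (.inr (.inr q)) := by
  rintro ⟨hne, h | h⟩ <;> exact h

lemma Hgraph_not_adj_hub_hub : ¬ (Hgraph s t).Adj (.inl ()) (.inl ()) := fun h => h.ne rfl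

end TargetAdj

section Concrete
variable (s t r : ℕ)


abbrev hubD : (Unit ⊕ ((Fin s × Fin 2) ⊕ (Fin t × Fin 2))) ⊕ (Fin r × Fin 2) :=
  Sum.inl (Sum.inl ())

lemma concrete_H1 : ∀ w, w ≠ hubD s t r →
    ∃ v, (disjUnion (Hgraph s t) (rK2 r)).Adj v w ∧
      ∀ u, (disjUnion (Hgraph s t) (rK2 r)).Adj v u → u = hubD s t r ∨ u = w := by
  rintro (⟨⟨⟩ | (⟨i, j⟩ | ⟨i, j⟩)⟩ | ⟨i, j⟩) hw
  · exact absurd rfl hw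
  · -- x/y vertex (i, j); witness is (i, other j)
    rcases fin2cases j with rfl | rfl
    · refine ⟨.inl (.inr (.inl (i, 1))), ?_, ?_⟩
      · rw [disjUnion_adj_inl, Hgraph_adj_x_x]
        exact ⟨rfl, (by decide : (1:Fin 2) ≠ (0:Fin 2))⟩
      · rintro (⟨⟨⟩ | (⟨i', j'⟩ | ⟨i', j'⟩)⟩ | ⟨i', j'⟩) hu
        · exact Or.inl rfl
        · rw [disjUnion_adj_inl, Hgraph_adj_x_x] at hu
          obtain ⟨h1, h2⟩ := hu
          have h2' : (1 : Fin 2) ≠ j' := h2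
          have hi : i = i' := h1
          cases hi
          right
          rw [fin2ne (Ne.symm h2') (by decide : (0:Fin 2) ≠ 1)]
        · rw [disjUnion_adj_inl] at hu
          exact absurd hu (Hgraph_not_adj_x_t s t _ _)
        · exact absurd hu (disjUnion_not_adj_inl_inr _ _ _ _)
    · refine ⟨.inl (.inr (.inl (i, 0))), ?_, ?_⟩
      · rw [disjUnion_adj_inl, Hgraph_adj_x_x]
        exact ⟨rfl, (by decide : (0:Fin 2) ≠ (1:Fin 2))⟩
      · rintro (⟨⟨⟩ | (⟨i', j'⟩ | ⟨i', j'⟩)⟩ | ⟨i', j'⟩) hu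
        · exact Or.inl rfl
        · rw [disjUnion_adj_inl, Hgraph_adj_x_x] at hu
          obtain ⟨h1, h2⟩ := hu
          have h2' : (0 : Fin 2) ≠ j' := h2
          have hi : i = i' := h1
          cases hi
          right
          rw [fin2ne (Ne.symm h2') (by decide : (1:Fin 2) ≠ 0)]
        · rw [disjUnion_adj_inl] at hu
          exact absurd hu (Hgraph_not_adj_x_t s t _ _)
        · exact absurd hu (disjUnion_not_adj_inl_inr _ _ _ _)
  · -- triangle vertex (i, j); witness is (i, other j)
    obtain ⟨j', hj'⟩ : ∃ j' : Fin 2, j' ≠ j := by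
      rcases fin2cases j with rfl | rfl
      · exact ⟨1, by decide⟩
      · exact ⟨0, by decide⟩
    refine ⟨.inl (.inr (.inr (i, j'))), ?_, ?_⟩
    · rw [disjUnion_adj_inl, Hgraph_adj_t_t]
      exact ⟨rfl, hj'⟩
    · rintro (⟨⟨⟩ | (⟨i'', j''⟩ | ⟨i'', j''⟩)⟩ | ⟨i'', j''⟩) hu
      · exact Or.inl rfl
      · rw [disjUnion_adj_inl] at hu
        exact absurd hu.symm (Hgraph_not_adj_x_t s t _ _)
      · rw [disjUnion_adj_inl, Hgraph_adj_t_t] at hu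
        obtain ⟨h1, h2⟩ := hu
        have h2' : j' ≠ j'' := h2
        have hi : i = i'' := h1
        cases hi
        right
        rw [fin2ne (Ne.symm h2') (Ne.symm hj')]
      · exact absurd hu (disjUnion_not_adj_inl_inr _ _ _ _)
  · -- K₂ vertex
    obtain ⟨j', hj'⟩ : ∃ j' : Fin 2, j' ≠ j := by
      rcases fin2cases j with rfl | rfl
      · exact ⟨1, by decide⟩
      · exact ⟨0, by decide⟩
    refine ⟨.inr (i, j'), ?_, ?_⟩
    · rw [disjUnion_adj_inr, rK2_adj_s2]
      exact ⟨rfl, hj'⟩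
    · rintro (⟨⟨⟩ | (⟨i'', j''⟩ | ⟨i'', j''⟩)⟩ | ⟨i'', j''⟩) hu
      · exact absurd hu (disjUnion_not_adj_inr_inl _ _ _ _)
      · exact absurd hu (disjUnion_not_adj_inr_inl _ _ _ _)
      · exact absurd hu (disjUnion_not_adj_inr_inl _ _ _ _)
      · rw [disjUnion_adj_inr, rK2_adj_s2] at hu
        obtain ⟨h1, h2⟩ := hu
        have h2' : j' ≠ j'' := h2
        have hi : i = i'' := h1
        cases hi
        right
        rw [fin2ne (Ne.symm h2') (Ne.symm hj')]

lemma concrete_H2 : ∀ v, (disjUnion (Hgraph s t) (rK2 r)).Adj v (hubD s t r) →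
    ∃ u, (disjUnion (Hgraph s t) (rK2 r)).Adj v u ∧ u ≠ hubD s t r := by
  rintro (⟨⟨⟩ | (⟨i, j⟩ | ⟨i, j⟩)⟩ | ⟨i, j⟩) hv
  · exact absurd rfl hv.ne
  · rw [disjUnion_adj_inl] at hv
    have hj : j = 0 := ((Hgraph_adj_hub_x s t (i,j)).mp hv.symm : (i, j).2 = 0)
    subst hj
    refine ⟨.inl (.inr (.inl (i, 1))), ?_, by simp⟩
    rw [disjUnion_adj_inl, Hgraph_adj_x_x]
    exact ⟨rfl, (by decide : (0:Fin 2) ≠ (1:Fin 2))⟩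
  · obtain ⟨j', hj'⟩ : ∃ j' : Fin 2, j' ≠ j := by
      rcases fin2cases j with rfl | rfl
      · exact ⟨1, by decide⟩
      · exact ⟨0, by decide⟩
    refine ⟨.inl (.inr (.inr (i, j'))), ?_, by simp⟩
    rw [disjUnion_adj_inl, Hgraph_adj_t_t]
    exact ⟨rfl, Ne.symm hj'⟩
  · exact absurd hv (disjUnion_not_adj_inr_inl _ _ _ _)

lemma concrete_card :
    Fintype.card ((Unit ⊕ ((Fin s × Fin 2) ⊕ (Fin t × Fin 2))) ⊕ (Fin r × Fin 2)) =
      2 * (s + t + r) + 1 := by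
  simp [Fintype.card_sum, Fintype.card_prod]
  ring

end Concrete


section BuildIso

lemma build_iso {V : Type*} [Fintype V] (G : SimpleGraph V) (b : V) (m : V → V)
    (hmb : ∀ w, w ≠ b → m w ≠ b)
    (hadjm : ∀ w, w ≠ b → G.Adj w (m w))
    (hnbr : ∀ w, w ≠ b → ∀ u, G.Adj w u → u = b ∨ u = m w)
    (hinv : ∀ w, w ≠ b → m (m w) = w)
    (hex : ∃ w, w ≠ b) :
    ∃ r s t : ℕ, 1 ≤ r + s + t ∧ Nonempty (G ≃g disjUnion (Hgraph s t) (rK2 r)) := by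
  classical
  let TX := {w : V // G.Adj b w ∧ ¬G.Adj b (m w)}
  let TT := {w : V // G.Adj b w ∧ G.Adj b (m w)}
  let TK := {w : V // w ≠ b ∧ ¬G.Adj b w ∧ ¬G.Adj b (m w)}
  let mT : TT → TT := fun a => ⟨m a.1, a.2.2, by rw [hinv a.1 a.2.1.ne']; exact a.2.1⟩
  let mK : TK → TK := fun a => ⟨m a.1, hmb a.1 a.2.1, a.2.2.2, by rw [hinv a.1 a.2.1]; exact a.2.2.1⟩
  have hinvT : ∀ a, mT (mT a) = a := fun a => Subtype.ext (hinv a.1 a.2.1.ne')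
  have hneT : ∀ a, mT a ≠ a := by
    intro a h
    have hm : m a.1 = a.1 := congrArg Subtype.val h
    exact G.irrefl (hm ▸ hadjm a.1 a.2.1.ne')
  have hinvK : ∀ a, mK (mK a) = a := fun a => Subtype.ext (hinv a.1 a.2.1)
  have hneK : ∀ a, mK a ≠ a := by
    intro a h
    have hm : m a.1 = a.1 := congrArg Subtype.val h
    exact G.irrefl (hm ▸ hadjm a.1 a.2.1)
  obtain ⟨t, eT, hT⟩ := exists_pairing mT hinvT hneT
  obtain ⟨r, eK, hK⟩ := exists_pairing mK hinvK hneK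
  set s := Fintype.card TX with hs
  let eX : TX ≃ Fin s := Fintype.equivFin TX
  -- pairing facts in image form
  have pairT : ∀ x : TT, (eT (mT x)).1 = (eT x).1 ∧ (eT (mT x)).2 ≠ (eT x).2 := by
    intro x
    rcases h : eT x with ⟨i, j⟩
    have hx : x = eT.symm (i, j) := by rw [← h, Equiv.symm_apply_apply]
    rcases fin2cases j with rfl | rfl
    · have h1 : mT x = eT.symm (i, 1) := by rw [hT i, hx]
      rw [h1, Equiv.apply_symm_apply]
      exact ⟨rfl, (by decide : (1 : Fin 2) ≠ 0)⟩
    · have h1 : mT x = eT.symm (i, 0) := by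
        rw [hx, hT i, hinvT]
      rw [h1, Equiv.apply_symm_apply]
      exact ⟨rfl, (by decide : (0 : Fin 2) ≠ 1)⟩
  have pairK : ∀ x : TK, (eK (mK x)).1 = (eK x).1 ∧ (eK (mK x)).2 ≠ (eK x).2 := by
    intro x
    rcases h : eK x with ⟨i, j⟩
    have hx : x = eK.symm (i, j) := by rw [← h, Equiv.symm_apply_apply]
    rcases fin2cases j with rfl | rfl
    · have h1 : mK x = eK.symm (i, 1) := by rw [hK i, hx]
      rw [h1, Equiv.apply_symm_apply]
      exact ⟨rfl, (by decide : (1 : Fin 2) ≠ 0)⟩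
    · have h1 : mK x = eK.symm (i, 0) := by
        rw [hx, hK i, hinvK]
      rw [h1, Equiv.apply_symm_apply]
      exact ⟨rfl, (by decide : (0 : Fin 2) ≠ 1)⟩
  let f : V → (Unit ⊕ ((Fin s × Fin 2) ⊕ (Fin t × Fin 2))) ⊕ (Fin r × Fin 2) := fun w =>
    if hb : w = b then Sum.inl (Sum.inl ())
    else if h1 : G.Adj b w then
      if h2 : G.Adj b (m w) then Sum.inl (Sum.inr (Sum.inr (eT ⟨w, h1, h2⟩)))
      else Sum.inl (Sum.inr (Sum.inl (eX ⟨w, h1, h2⟩, 0)))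
    else
      if h2 : G.Adj b (m w) then
        Sum.inl (Sum.inr (Sum.inl (eX ⟨m w, h2, by rw [hinv w hb]; exact h1⟩, 1)))
      else Sum.inr (eK ⟨w, hb, h1, h2⟩)
  let g : (Unit ⊕ ((Fin s × Fin 2) ⊕ (Fin t × Fin 2))) ⊕ (Fin r × Fin 2) → V := fun a =>
    match a with
    | Sum.inl (Sum.inl _) => b
    | Sum.inl (Sum.inr (Sum.inl p)) => if p.2 = 0 then (eX.symm p.1).1 else m (eX.symm p.1).1
    | Sum.inl (Sum.inr (Sum.inr p)) => (eT.symm p).1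
    | Sum.inr p => (eK.symm p).1
  have f_b : f b = Sum.inl (Sum.inl ()) := dif_pos rfl
  have f_T : ∀ w (h1 : G.Adj b w) (h2 : G.Adj b (m w)),
      f w = Sum.inl (Sum.inr (Sum.inr (eT ⟨w, h1, h2⟩))) := by
    intro w h1 h2
    simp only [f]
    rw [dif_neg h1.ne', dif_pos h1, dif_pos h2]
  have f_X : ∀ w (h1 : G.Adj b w) (h2 : ¬G.Adj b (m w)),
      f w = Sum.inl (Sum.inr (Sum.inl (eX ⟨w, h1, h2⟩, 0))) := by
    intro w h1 h2
    simp only [f]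
    rw [dif_neg h1.ne', dif_pos h1, dif_neg h2]
  have f_Y : ∀ w (hb : w ≠ b) (h1 : ¬G.Adj b w) (h2 : G.Adj b (m w))
      (h3 : ¬G.Adj b (m (m w))),
      f w = Sum.inl (Sum.inr (Sum.inl (eX ⟨m w, h2, h3⟩, 1))) := by
    intro w hb h1 h2 h3
    simp only [f]
    rw [dif_neg hb, dif_neg h1, dif_pos h2]
  have f_K : ∀ w (hb : w ≠ b) (h1 : ¬G.Adj b w) (h2 : ¬G.Adj b (m w)),
      f w = Sum.inr (eK ⟨w, hb, h1, h2⟩) := by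
    intro w hb h1 h2
    simp only [f]
    rw [dif_neg hb, dif_neg h1, dif_neg h2]
  have g_b : g (Sum.inl (Sum.inl ())) = b := rfl
  have g_x0 : ∀ i, g (Sum.inl (Sum.inr (Sum.inl (i, 0)))) = (eX.symm i).1 := by
    intro i
    show (if ((i, (0 : Fin 2)).2 = 0) then (eX.symm i).1 else m (eX.symm i).1) = (eX.symm i).1
    rw [if_pos rfl]
  have g_x1 : ∀ i, g (Sum.inl (Sum.inr (Sum.inl (i, 1)))) = m (eX.symm i).1 := by
    intro i
    show (if ((i, (1 : Fin 2)).2 = 0) then (eX.symm i).1 else m (eX.symm i).1) = m (eX.symm i).1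
    rw [if_neg (show ¬((1 : Fin 2) = 0) by decide)]
  have g_t : ∀ p, g (Sum.inl (Sum.inr (Sum.inr p))) = (eT.symm p).1 := fun p => rfl
  have g_k : ∀ p, g (Sum.inr p) = (eK.symm p).1 := fun p => rfl
  have linv : Function.LeftInverse g f := by
    intro w
    by_cases hb : w = b
    · subst hb; rw [f_b]
    · by_cases h1 : G.Adj b w
      · by_cases h2 : G.Adj b (m w)
        · rw [f_T w h1 h2, g_t, Equiv.symm_apply_apply]
        · rw [f_X w h1 h2, g_x0, Equiv.symm_apply_apply]
      · by_cases h2 : G.Adj b (m w)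
        · rw [f_Y w hb h1 h2 (by rw [hinv w hb]; exact h1), g_x1, Equiv.symm_apply_apply]
          exact hinv w hb
        · rw [f_K w hb h1 h2, g_k, Equiv.symm_apply_apply]
  have rinv : Function.RightInverse g f := by
    rintro ((⟨⟩ | (⟨i, j⟩ | p)) | p)
    · rw [g_b, f_b]
    · rcases fin2cases j with rfl | rfl
      · rw [g_x0]
        obtain ⟨h1, h2⟩ := (eX.symm i).2
        rw [f_X _ h1 h2]
        have he : (⟨(eX.symm i).1, h1, h2⟩ : TX) = eX.symm i := Subtype.ext rfl
        rw [he, Equiv.apply_symm_apply]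
      · rw [g_x1]
        obtain ⟨h1, h2⟩ := (eX.symm i).2
        have hwb : (eX.symm i).1 ≠ b := h1.ne'
        have p1 : G.Adj b (m (m (eX.symm i).1)) := by rw [hinv _ hwb]; exact h1
        have p2 : ¬G.Adj b (m (m (m (eX.symm i).1))) := by rw [hinv _ hwb]; exact h2
        rw [f_Y (m (eX.symm i).1) (hmb _ hwb) h2 p1 p2]
        have he : (⟨m (m (eX.symm i).1), p1, p2⟩ : TX) = eX.symm i := Subtype.ext (hinv _ hwb)
        rw [he, Equiv.apply_symm_apply]
    · rw [g_t]
      obtain ⟨h1, h2⟩ := (eT.symm p).2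
      rw [f_T _ h1 h2]
      have he : (⟨(eT.symm p).1, h1, h2⟩ : TT) = eT.symm p := Subtype.ext rfl
      rw [he, Equiv.apply_symm_apply]
    · rw [g_k]
      obtain ⟨hb', h1, h2⟩ := (eK.symm p).2
      rw [f_K _ hb' h1 h2]
      have he : (⟨(eK.symm p).1, hb', h1, h2⟩ : TK) = eK.symm p := Subtype.ext rfl
      rw [he, Equiv.apply_symm_apply]
  have fwd_b : ∀ c, G.Adj b c → (disjUnion (Hgraph s t) (rK2 r)).Adj (f b) (f c) := by
    intro c h
    rw [f_b]
    by_cases h2 : G.Adj b (m c)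
    · rw [f_T c h h2]
      exact (disjUnion_adj_inl _ _ _ _).mpr (Hgraph_adj_hub_t s t _)
    · rw [f_X c h h2]
      exact (disjUnion_adj_inl _ _ _ _).mpr ((Hgraph_adj_hub_x s t _).mpr rfl)
  have fwd_m : ∀ a, a ≠ b → (disjUnion (Hgraph s t) (rK2 r)).Adj (f a) (f (m a)) := by
    intro a ha
    by_cases h1 : G.Adj b a
    · by_cases h2 : G.Adj b (m a)
      · rw [f_T a h1 h2, f_T (m a) h2 (by rw [hinv a ha]; exact h1)]
        apply (disjUnion_adj_inl _ _ _ _).mpr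
        apply (Hgraph_adj_t_t s t _ _).mpr
        have he : (⟨m a, h2, by rw [hinv a ha]; exact h1⟩ : TT) = mT ⟨a, h1, h2⟩ :=
          Subtype.ext rfl
        rw [he]
        exact ⟨(pairT ⟨a, h1, h2⟩).1.symm, Ne.symm (pairT ⟨a, h1, h2⟩).2⟩
      · have p1 : G.Adj b (m (m a)) := by rw [hinv a ha]; exact h1
        have p2 : ¬G.Adj b (m (m (m a))) := by rw [hinv a ha]; exact h2
        rw [f_X a h1 h2, f_Y (m a) (hmb a ha) h2 p1 p2]
        apply (disjUnion_adj_inl _ _ _ _).mpr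
        apply (Hgraph_adj_x_x s t _ _).mpr
        have he : (⟨m (m a), p1, p2⟩ : TX) = ⟨a, h1, h2⟩ := Subtype.ext (hinv a ha)
        rw [he]
        exact ⟨rfl, (by decide : (0 : Fin 2) ≠ 1)⟩
    · by_cases h2 : G.Adj b (m a)
      · rw [f_Y a ha h1 h2 (by rw [hinv a ha]; exact h1), f_X (m a) h2 (by rw [hinv a ha]; exact h1)]
        apply (disjUnion_adj_inl _ _ _ _).mpr
        apply (Hgraph_adj_x_x s t _ _).mpr
        exact ⟨rfl, (by decide : (1 : Fin 2) ≠ 0)⟩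
      · have p1 : ¬G.Adj b (m (m a)) := by rw [hinv a ha]; exact h1
        rw [f_K a ha h1 h2, f_K (m a) (hmb a ha) h2 p1]
        apply (disjUnion_adj_inr _ _ _ _).mpr
        apply (rK2_adj_s2 r _ _).mpr
        have he : (⟨m a, hmb a ha, h2, p1⟩ : TK) = mK ⟨a, ha, h1, h2⟩ := Subtype.ext rfl
        rw [he]
        exact ⟨(pairK ⟨a, ha, h1, h2⟩).1.symm, Ne.symm (pairK ⟨a, ha, h1, h2⟩).2⟩
  have fwd : ∀ a c, G.Adj a c → (disjUnion (Hgraph s t) (rK2 r)).Adj (f a) (f c) := by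
    intro a c hac
    by_cases ha : a = b
    · subst ha; exact fwd_b c hac
    · by_cases hc : c = b
      · subst hc; exact (fwd_b a hac.symm).symm
      · rcases hnbr a ha c hac with h | rfl
        · exact absurd h hc
        · exact fwd_m a ha
  have gAdj : ∀ u v, (disjUnion (Hgraph s t) (rK2 r)).Adj u v → G.Adj (g u) (g v) := by
    rintro ((⟨⟩ | (⟨i, j⟩ | p)) | p) ((⟨⟩ | (⟨i', j'⟩ | q)) | q) huv
    · exact absurd rfl huv.ne
    · rw [disjUnion_adj_inl, Hgraph_adj_hub_x] at huv
      have hj : j' = 0 := huv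
      subst hj
      rw [g_b, g_x0]
      exact (eX.symm i').2.1
    · rw [g_b, g_t]
      exact (eT.symm q).2.1
    · exact absurd huv (disjUnion_not_adj_inl_inr _ _ _ _)
    · have huv' := huv.symm
      rw [disjUnion_adj_inl, Hgraph_adj_hub_x] at huv'
      have hj : j = 0 := huv'
      subst hj
      rw [g_b, g_x0]
      exact (eX.symm i).2.1.symm
    · rw [disjUnion_adj_inl, Hgraph_adj_x_x] at huv
      obtain ⟨h1, h2⟩ := huv
      have hii : i = i' := h1
      subst hii
      have h2' : j ≠ j' := h2
      rcases fin2cases j with rfl | rfl <;> rcases fin2cases j' with rfl | rfl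
      · exact absurd rfl h2'
      · rw [g_x0, g_x1]
        exact hadjm (eX.symm i).1 (eX.symm i).2.1.ne'
      · rw [g_x0, g_x1]
        exact (hadjm (eX.symm i).1 (eX.symm i).2.1.ne').symm
      · exact absurd rfl h2'
    · rw [disjUnion_adj_inl] at huv
      exact absurd huv (Hgraph_not_adj_x_t s t _ _)
    · exact absurd huv (disjUnion_not_adj_inl_inr _ _ _ _)
    · rw [g_b, g_t]
      exact (eT.symm p).2.1.symm
    · rw [disjUnion_adj_inl] at huv
      exact absurd huv.symm (Hgraph_not_adj_x_t s t _ _)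
    · rw [disjUnion_adj_inl, Hgraph_adj_t_t] at huv
      obtain ⟨h1, h2⟩ := huv
      have h1' : (eT (mT (eT.symm p))).1 = q.1 := by
        rw [(pairT (eT.symm p)).1, Equiv.apply_symm_apply]
        exact h1
      have h2' : (eT (mT (eT.symm p))).2 = q.2 := by
        have ha : (eT (mT (eT.symm p))).2 ≠ p.2 := by
          have := (pairT (eT.symm p)).2
          rwa [Equiv.apply_symm_apply] at this
        exact fin2ne ha (Ne.symm h2)
      have he : eT.symm q = mT (eT.symm p) := by
        rw [← Prod.ext h1' h2', Equiv.symm_apply_apply]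
      rw [g_t, g_t, he]
      exact hadjm (eT.symm p).1 (eT.symm p).2.1.ne'
    · exact absurd huv (disjUnion_not_adj_inl_inr _ _ _ _)
    · exact absurd huv (disjUnion_not_adj_inr_inl _ _ _ _)
    · exact absurd huv (disjUnion_not_adj_inr_inl _ _ _ _)
    · exact absurd huv (disjUnion_not_adj_inr_inl _ _ _ _)
    · rw [disjUnion_adj_inr, rK2_adj_s2] at huv
      obtain ⟨h1, h2⟩ := huv
      have h1' : (eK (mK (eK.symm p))).1 = q.1 := by
        rw [(pairK (eK.symm p)).1, Equiv.apply_symm_apply]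
        exact h1
      have h2' : (eK (mK (eK.symm p))).2 = q.2 := by
        have ha : (eK (mK (eK.symm p))).2 ≠ p.2 := by
          have := (pairK (eK.symm p)).2
          rwa [Equiv.apply_symm_apply] at this
        exact fin2ne ha (Ne.symm h2)
      have he : eK.symm q = mK (eK.symm p) := by
        rw [← Prod.ext h1' h2', Equiv.symm_apply_apply]
      rw [g_k, g_k, he]
      exact hadjm (eK.symm p).1 (eK.symm p).2.1
  refine ⟨r, s, t, ?_, ⟨⟨⟨f, g, linv, rinv⟩, ?_⟩⟩⟩
  · obtain ⟨w, hw⟩ := hex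
    by_cases h1 : G.Adj b w
    · by_cases h2 : G.Adj b (m w)
      · have : 0 < t := (eT ⟨w, h1, h2⟩).1.pos
        omega
      · have : 0 < s := Fintype.card_pos_iff.mpr ⟨⟨w, h1, h2⟩⟩
        omega
    · by_cases h2 : G.Adj b (m w)
      · have : 0 < s := Fintype.card_pos_iff.mpr ⟨⟨m w, h2, by rw [hinv w hw]; exact h1⟩⟩
        omega
      · have : 0 < r := (eK ⟨w, hw, h1, h2⟩).1.pos
        omega
  · intro a c
    constructor
    · intro h
      simp only [Equiv.coe_fn_mk] at h
      have h2 := gAdj _ _ h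
      rwa [linv a, linv c] at h2
    · intro h
      simp only [Equiv.coe_fn_mk]
      exact fwd a c h

end BuildIso


section StructureProof
variable {V : Type*} [Fintype V]

lemma leaf_lemma (G : SimpleGraph V) (b : V)
    (H1 : ∀ w, w ≠ b → ∃ v, G.Adj v w ∧ ∀ u, G.Adj v u → u = b ∨ u = w) :
    ∀ w, w ≠ b → ¬G.Adj b w → ∃ p, G.Adj w p ∧ ∀ u, G.Adj w u → u = p := by
  intro w hw hnb
  obtain ⟨v, hvw, hv⟩ := H1 w hw
  have hvb : v ≠ b := fun h => hnb (h ▸ hvw)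
  by_cases hbv : G.Adj b v
  · obtain ⟨v3, hv3v, hv3⟩ := H1 v hvb
    rcases hv v3 hv3v.symm with h3b | h3w
    · -- v3 = b : N(b) = {v}; global case
      rw [h3b] at hv3
      have hNb : ∀ u, G.Adj b u → u = v := by
        intro u hu
        rcases hv3 u hu with h | h
        · exact absurd (h ▸ hu) G.irrefl
        · exact h
      refine ⟨v, hvw.symm, ?_⟩
      intro u hu
      by_contra huv
      have hub : u ≠ b := fun h => hnb (h ▸ hu).symm
      obtain ⟨vu, hvuu, hvu⟩ := H1 u hub
      by_cases hbvu : G.Adj b vu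
      · have hvuv : vu = v := hNb vu hbvu
        subst hvuv
        rcases hv u hvuu with h | h
        · exact hub h
        · exact G.irrefl (h ▸ hu)
      · have hNvu : ∀ x, G.Adj vu x → x = u := by
          intro x hx
          rcases hvu x hx with h | h
          · exact absurd (h ▸ hx).symm hbvu
          · exact h
        have hvub : vu ≠ b := fun h => huv (hNb u (h ▸ hvuu))
        obtain ⟨v4, hv4, hv4p⟩ := H1 vu hvub
        have hv4u : v4 = u := hNvu v4 hv4.symm
        rw [hv4u] at hv4p
        rcases hv4p w hu.symm with h | h
        · exact hw h
        · exact huv ((hNvu v (h ▸ hvw.symm)).symm)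
    · -- v3 = w : N(w) ⊆ {b, v}
      rw [h3w] at hv3
      refine ⟨v, hvw.symm, ?_⟩
      intro u hu
      rcases hv3 u hu with h | h
      · exact absurd (h ▸ hu).symm hnb
      · exact h
  · have hNv : ∀ u, G.Adj v u → u = w := by
      intro u hu
      rcases hv u hu with h | h
      · exact absurd (h ▸ hu).symm hbv
      · exact h
    obtain ⟨v2, hv2v, hv2⟩ := H1 v hvb
    have h : v2 = w := hNv v2 hv2v.symm
    rw [h] at hv2
    refine ⟨v, hvw.symm, ?_⟩
    intro u hu
    rcases hv2 u hu with h | h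
    · exact absurd (h ▸ hu).symm hnb
    · exact h

lemma pair_lemma (G : SimpleGraph V) (b : V)
    (H1 : ∀ w, w ≠ b → ∃ v, G.Adj v w ∧ ∀ u, G.Adj v u → u = b ∨ u = w)
    (H2 : ∃ u₀, ∀ v, G.Adj v u₀ → ∃ u, G.Adj v u ∧ u ≠ u₀) :
    ∀ w, G.Adj b w → ∃ p, p ≠ b ∧ G.Adj w p ∧ ∀ u, G.Adj w u → u = b ∨ u = p := by
  intro w hbw
  have hw : w ≠ b := hbw.ne'
  obtain ⟨v, hvw, hv⟩ := H1 w hw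
  by_cases hvb : v = b
  · rw [hvb] at hv hvw
    have hNb : ∀ u, G.Adj b u → u = w := by
      intro u hu
      rcases hv u hu with h | h
      · exact absurd (h ▸ hu) G.irrefl
      · exact h
    by_cases hp : ∃ p, G.Adj w p ∧ p ≠ b
    · obtain ⟨p, hwp, hpb⟩ := hp
      have hbp : ¬G.Adj b p := fun h => G.irrefl ((hNb p h) ▸ hwp)
      obtain ⟨q, hpq, hq⟩ := leaf_lemma G b H1 p hpb hbp
      obtain ⟨vp, hvpp, hvp⟩ := H1 p hpb
      have hwq : w = q := hq w hwp.symm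
      have hvpw : vp = w := (hq vp hvpp.symm).trans hwq.symm
      rw [hvpw] at hvp
      exact ⟨p, hpb, hwp, hvp⟩
    · push_neg at hp
      exfalso
      obtain ⟨u₀, hu₀⟩ := H2
      have key : ∀ x : V, ∃ v, G.Adj v x ∧ ∀ y, G.Adj v y → y = x := by
        intro x
        by_cases hxb : x = b
        · rw [hxb]
          exact ⟨w, hbw.symm, hp⟩
        · by_cases hxw : x = w
          · rw [hxw]
            exact ⟨b, hbw, hNb⟩
          · have hbx : ¬G.Adj b x := fun h => hxw (hNb x h)
            obtain ⟨px, hxpx, hNx⟩ := leaf_lemma G b H1 x hxb hbx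
            have hpxb : px ≠ b := fun h => hbx (h ▸ hxpx).symm
            have hbpx : ¬G.Adj b px := by
              intro h
              have hpw : px = w := hNb px h
              exact hxb (hp x ((hpw ▸ hxpx).symm))
            obtain ⟨q, hpxq, hNpx⟩ := leaf_lemma G b H1 px hpxb hbpx
            exact ⟨px, hxpx.symm, fun y hy => (hNpx y hy).trans (hNpx x hxpx.symm).symm⟩
      obtain ⟨l, hladj, hl⟩ := key u₀
      obtain ⟨u, hlu, hune⟩ := hu₀ l hladj
      exact hune (hl u hlu)
  · by_cases hbv : G.Adj b v
    · obtain ⟨v3, hv3v, hv3⟩ := H1 v hvb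
      rcases hv v3 hv3v.symm with h | h
      · rw [h] at hv3
        rcases hv3 w hbw with h | h
        · exact absurd h hw
        · exact absurd h.symm hvw.ne
      · rw [h] at hv3
        exact ⟨v, hvb, hvw.symm, hv3⟩
    · have hNv : ∀ u, G.Adj v u → u = w := by
        intro u hu
        rcases hv u hu with h | h
        · exact absurd (h ▸ hu).symm hbv
        · exact h
      obtain ⟨v2, hv2v, hv2⟩ := H1 v hvb
      have h : v2 = w := hNv v2 hv2v.symm
      rw [h] at hv2
      exact ⟨v, hvb, hvw.symm, hv2⟩

lemma structure_of_Q (G : SimpleGraph V) (b : V)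
    (H1 : ∀ w, w ≠ b → ∃ v, G.Adj v w ∧ ∀ u, G.Adj v u → u = b ∨ u = w)
    (H2 : ∃ u₀, ∀ v, G.Adj v u₀ → ∃ u, G.Adj v u ∧ u ≠ u₀)
    (hex : ∃ w, w ≠ b) :
    ∃ r s t : ℕ, 1 ≤ r + s + t ∧ Nonempty (G ≃g disjUnion (Hgraph s t) (rK2 r)) := by
  classical
  have SL : ∀ w, w ≠ b → ∃ p, p ≠ b ∧ G.Adj w p ∧ ∀ u, G.Adj w u → u = b ∨ u = p := by
    intro w hw
    by_cases hbw : G.Adj b w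
    · exact pair_lemma G b H1 H2 w hbw
    · obtain ⟨p, hwp, hN⟩ := leaf_lemma G b H1 w hw hbw
      have hpb : p ≠ b := fun h => hbw (h ▸ hwp).symm
      exact ⟨p, hpb, hwp, fun u hu => Or.inr (hN u hu)⟩
  choose p hpb hpadj hpnbr using SL
  let m : V → V := fun w => if h : w ≠ b then p w h else b
  have hm : ∀ w (h : w ≠ b), m w = p w h := fun w h => dif_pos h
  have hmb : ∀ w, w ≠ b → m w ≠ b := by intro w h; rw [hm w h]; exact hpb w h
  have hadjm : ∀ w, w ≠ b → G.Adj w (m w) := by intro w h; rw [hm w h]; exact hpadj w h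
  have hnbr : ∀ w, w ≠ b → ∀ u, G.Adj w u → u = b ∨ u = m w := by
    intro w h u hu; rw [hm w h]; exact hpnbr w h u hu
  have hinv : ∀ w, w ≠ b → m (m w) = w := by
    intro w h
    rcases hnbr (m w) (hmb w h) w (hadjm w h).symm with hc | hc
    · exact absurd hc h
    · exact hc.symm
  exact build_iso G b m hmb hadjm hnbr hinv hex

lemma Q_of_iso (G : SimpleGraph V) (r s t : ℕ) (hrst : 1 ≤ r + s + t)
    (e : G ≃g disjUnion (Hgraph s t) (rK2 r)) :
    (∃ b : V, ∀ w, w ≠ b → ∃ v, G.Adj v w ∧ ∀ u, G.Adj v u → u = b ∨ u = w) ∧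
      (∃ u₀ : V, ∀ v, G.Adj v u₀ → ∃ u, G.Adj v u ∧ u ≠ u₀) ∧ 2 ≤ Fintype.card V := by
  have hcard : Fintype.card V = 2 * (s + t + r) + 1 := by
    rw [Fintype.card_congr e.toEquiv, concrete_card]
  refine ⟨⟨e.symm (hubD s t r), ?_⟩, ⟨e.symm (hubD s t r), ?_⟩, by omega⟩
  · intro w hw
    have hew : e w ≠ hubD s t r := by
      intro h
      apply hw
      rw [← h, RelIso.symm_apply_apply]
    obtain ⟨v', hv', hall⟩ := concrete_H1 s t r (e w) hew
    refine ⟨e.symm v', ?_, ?_⟩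
    · rw [← e.map_adj_iff, RelIso.apply_symm_apply]
      exact hv'
    · intro u hu
      rw [← e.map_adj_iff, RelIso.apply_symm_apply] at hu
      rcases hall (e u) hu with h | h
      · left
        rw [← RelIso.symm_apply_apply e u, h]
      · right
        exact e.injective h
  · intro v hv
    rw [← e.map_adj_iff, RelIso.apply_symm_apply] at hv
    obtain ⟨u', hu', hune⟩ := concrete_H2 s t r (e v) hv
    refine ⟨e.symm u', ?_, ?_⟩
    · rw [← e.map_adj_iff, RelIso.apply_symm_apply]
      exact hu'
    · intro h
      exact hune (by rw [← RelIso.apply_symm_apply e u', h, RelIso.apply_symm_apply])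

end StructureProof


section Final
variable {V : Type*} [Fintype V]

lemma q_of_lhs (G : SimpleGraph V) (h : skewTh G = 2 ∧ skewThK G 1 = 2) :
    (∃ b : V, ∀ w, w ≠ b → ∃ v, G.Adj v w ∧ ∀ u, G.Adj v u → u = b ∨ u = w) ∧
      (∃ u₀ : V, ∀ v, G.Adj v u₀ → ∃ u, G.Adj v u ∧ u ≠ u₀) ∧ 2 ≤ Fintype.card V := by
  classical
  obtain ⟨hth, hthk⟩ := h
  have hM1ne : {m | ∃ S : Set V, IsSkewZFS G S ∧ S.ncard = 1 ∧
      m = S.ncard + skewPt G S}.Nonempty := by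
    by_contra hne
    rw [Set.not_nonempty_iff_eq_empty] at hne
    rw [skewThK, hne, Nat.sInf_empty] at hthk
    omega
  have h2mem : 2 ∈ {m | ∃ S : Set V, IsSkewZFS G S ∧ S.ncard = 1 ∧
      m = S.ncard + skewPt G S} := by
    rw [← hthk]
    exact Nat.sInf_mem hM1ne
  obtain ⟨S, hS, hc1, heq⟩ := h2mem
  have hpt1 : skewPt G S = 1 := by omega
  have hPne : {n | skewIter G S n = Set.univ}.Nonempty := hS
  have h1P : skewIter G S 1 = Set.univ := by
    have hmem := Nat.sInf_mem hPne
    rw [show sInf {n | skewIter G S n = Set.univ} = skewPt G S from rfl, hpt1] at hmem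
    exact hmem
  have h0P : skewIter G S 0 ≠ Set.univ := by
    intro h0
    have : skewPt G S = 0 := Nat.sInf_eq_zero.mpr (Or.inl h0)
    omega
  obtain ⟨b, rfl⟩ := Set.ncard_eq_one.mp hc1
  have hstep : skewStep G {b} = Set.univ := h1P
  have hwex : ∃ w : V, w ≠ b := by
    by_contra hall
    push_neg at hall
    apply h0P
    apply Set.eq_univ_iff_forall.mpr
    intro w
    rw [show skewIter G {b} 0 = {b} from rfl, hall w]
    rfl
  refine ⟨⟨b, ?_⟩, ?_, ?_⟩
  · intro w hw
    have hw' : w ∈ skewStep G {b} := by rw [hstep]; trivial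
    rcases hw' with hw1 | hw2
    · exact absurd hw1 hw
    · obtain ⟨v, hv, hall⟩ := hw2
      refine ⟨v, hv, fun u hu => ?_⟩
      rcases eq_or_ne u b with h | h
      · exact Or.inl h
      · exact Or.inr (hall u hu h)
  · by_contra hno
    push_neg at hno
    have hstep0 : skewStep G (∅ : Set V) = Set.univ := by
      apply Set.eq_univ_iff_forall.mpr
      intro w
      obtain ⟨v, hv, hall⟩ := hno w
      exact Or.inr ⟨v, hv, fun u hu _ => hall u hu⟩
    have hzfs : IsSkewZFS G (∅ : Set V) := ⟨1, hstep0⟩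
    have hpt0 : skewPt G (∅ : Set V) = 1 := by
      apply le_antisymm
      · exact Nat.sInf_le hstep0
      · rcases Nat.eq_zero_or_pos (skewPt G (∅ : Set V)) with h0 | h0
        · exfalso
          rcases Nat.sInf_eq_zero.mp h0 with h | h
          · have h' : (∅ : Set V) = Set.univ := h
            have : b ∈ (∅ : Set V) := by rw [h']; trivial
            exact this
          · exact absurd (Set.eq_empty_iff_forall_notMem.mp h 1 hstep0) not_false
        · exact h0
    have h1mem : (1 : ℕ) ∈ {m | ∃ S : Set V, IsSkewZFS G S ∧ m = S.ncard + skewPt G S} := by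
      exact ⟨∅, hzfs, by rw [Set.ncard_empty, hpt0]⟩
    have : skewTh G ≤ 1 := Nat.sInf_le h1mem
    omega
  · obtain ⟨w, hw⟩ := hwex
    exact Fintype.one_lt_card_iff.mpr ⟨w, b, hw⟩

lemma lhs_of_q (G : SimpleGraph V) (b : V)
    (H1 : ∀ w, w ≠ b → ∃ v, G.Adj v w ∧ ∀ u, G.Adj v u → u = b ∨ u = w)
    (H2 : ∃ u₀ : V, ∀ v, G.Adj v u₀ → ∃ u, G.Adj v u ∧ u ≠ u₀)
    (hcard : 2 ≤ Fintype.card V) :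
    skewTh G = 2 ∧ skewThK G 1 = 2 := by
  classical
  have hstep : skewStep G {b} = Set.univ := by
    apply Set.eq_univ_iff_forall.mpr
    intro w
    by_cases hw : w = b
    · exact Or.inl (by rw [hw]; rfl)
    · obtain ⟨v, hv, hall⟩ := H1 w hw
      refine Or.inr ⟨v, hv, fun u hu hub => ?_⟩
      rcases hall u hu with h | h
      · exact absurd h hub
      · exact h
  have h1P : skewIter G {b} 1 = Set.univ := hstep
  have hzfs : IsSkewZFS G ({b} : Set V) := ⟨1, h1P⟩
  have hbne : ({b} : Set V) ≠ Set.univ := by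
    intro h
    have h1 : (Set.univ : Set V).ncard = 1 := by rw [← h]; exact Set.ncard_singleton b
    rw [Set.ncard_univ, Nat.card_eq_fintype_card] at h1
    omega
  have hpt : skewPt G ({b} : Set V) = 1 := by
    apply le_antisymm
    · exact Nat.sInf_le h1P
    · rcases Nat.eq_zero_or_pos (skewPt G ({b} : Set V)) with h0 | h0
      · exfalso
        rcases Nat.sInf_eq_zero.mp h0 with h | h
        · exact hbne h
        · exact absurd (Set.eq_empty_iff_forall_notMem.mp h 1 h1P) not_false
      · exact h0
  -- any singleton forcing set has pt ≥ 1
  have hsing : ∀ S : Set V, IsSkewZFS G S → S.ncard = 1 → 1 ≤ skewPt G S := by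
    intro S hS hc
    rcases Nat.eq_zero_or_pos (skewPt G S) with h0 | h0
    · exfalso
      rcases Nat.sInf_eq_zero.mp h0 with h | h
      · have hSuniv : S = Set.univ := h
        rw [hSuniv, Set.ncard_univ, Nat.card_eq_fintype_card] at hc
        omega
      · exact absurd (Set.eq_empty_iff_forall_notMem.mp h _ hS.choose_spec) not_false
    · exact h0
  -- the empty set has pt ≥ 2 (if forcing at all)
  have hempty : ∀ n, skewIter G (∅ : Set V) n = Set.univ → 2 ≤ n := by
    intro n hn
    by_contra hlt
    interval_cases n
    · have : b ∈ (∅ : Set V) := by rw [show skewIter G (∅:Set V) 0 = ∅ from rfl] at hn; rw [hn]; trivial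
      exact this
    · obtain ⟨u₀, hu₀⟩ := H2
      have : u₀ ∈ skewStep G (∅ : Set V) := by
        rw [show skewIter G (∅:Set V) 1 = skewStep G (∅:Set V) from rfl] at hn
        rw [hn]; trivial
      rcases this with h | h
      · exact h
      · obtain ⟨v, hv, hall⟩ := h
        obtain ⟨u, hu, hune⟩ := hu₀ v hv
        exact hune (hall u hu (by simp))
  have hmem2 : (2 : ℕ) ∈ {m | ∃ S : Set V, IsSkewZFS G S ∧ m = S.ncard + skewPt G S} :=
    ⟨{b}, hzfs, by rw [Set.ncard_singleton, hpt]⟩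
  have hmem2' : (2 : ℕ) ∈ {m | ∃ S : Set V, IsSkewZFS G S ∧ S.ncard = 1 ∧
      m = S.ncard + skewPt G S} :=
    ⟨{b}, hzfs, Set.ncard_singleton b, by rw [Set.ncard_singleton, hpt]⟩
  constructor
  · apply le_antisymm
    · exact Nat.sInf_le hmem2
    · apply le_csInf ⟨2, hmem2⟩
      rintro m ⟨S, hS, rfl⟩
      have hSfin : S.Finite := Set.toFinite S
      rcases Nat.lt_or_ge S.ncard 2 with hc | hc
      · interval_cases hcS : S.ncard
        · have hSempty : S = ∅ := by
            rw [← Set.ncard_eq_zero hSfin]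
            exact hcS
          subst hSempty
          have h2le : 2 ≤ skewPt G (∅ : Set V) := by
            apply le_csInf hS
            intro n hn
            exact hempty n hn
          omega
        · have := hsing S hS hcS
          omega
      · omega
  · apply le_antisymm
    · exact Nat.sInf_le hmem2'
    · apply le_csInf ⟨2, hmem2'⟩
      rintro m ⟨S, hS, hc1, rfl⟩
      have := hsing S hS hc1
      omega

end Final


/-- `th₋(G) = th₋(G,1) = 2` iff `G ≅ H(s,t) ⊔ rK₂` with `r+s+t ≥ 1`;
in this case the order of `G` is odd. -/
theorem skewTh_eq_two_of_one_vertex_iff {V : Type*} [Fintype V] (G : SimpleGraph V) :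
    ((skewTh G = 2 ∧ skewThK G 1 = 2) ↔
      ∃ r s t : ℕ, 1 ≤ r + s + t ∧
        Nonempty (G ≃g disjUnion (Hgraph s t) (rK2 r))) ∧
    ((skewTh G = 2 ∧ skewThK G 1 = 2) → Odd (Fintype.card V)) := by
  have fwd : (skewTh G = 2 ∧ skewThK G 1 = 2) →
      ∃ r s t : ℕ, 1 ≤ r + s + t ∧ Nonempty (G ≃g disjUnion (Hgraph s t) (rK2 r)) := by
    intro h
    obtain ⟨⟨b, H1⟩, H2, hcard⟩ := q_of_lhs G h
    exact structure_of_Q G b H1 H2 (Fintype.exists_ne_of_one_lt_card (by omega) b)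
  constructor
  · constructor
    · exact fwd
    · rintro ⟨r, s, t, hrst, ⟨e⟩⟩
      obtain ⟨⟨b, H1⟩, H2, hcard⟩ := Q_of_iso G r s t hrst e
      exact lhs_of_q G b H1 H2 hcard
  · intro h
    obtain ⟨r, s, t, hrst, ⟨e⟩⟩ := fwd h
    rw [Fintype.card_congr e.toEquiv, concrete_card, Nat.odd_iff]
    omega
end

section
/- For every n ≥ 1, the friendship graph F_n satisfies Z_-(F_n) = 1, pt_-(F_n) = 1, and th_-(F_n) = 2. -/
open SimpleGraph

section FriendshipAux

variable {n : ℕ}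

lemma friend_adj_hub_inr (p : Fin n × Fin 2) :
    (friendshipGraph n).Adj (Sum.inl ()) (Sum.inr p) := by
  rw [friendshipGraph, SimpleGraph.fromRel_adj]
  exact ⟨by simp, Or.inl trivial⟩

lemma friend_adj_inr_inl (p : Fin n × Fin 2) (u : Unit) :
    (friendshipGraph n).Adj (Sum.inr p) (Sum.inl u) := by
  rw [friendshipGraph, SimpleGraph.fromRel_adj]
  exact ⟨by simp, Or.inr trivial⟩

lemma friend_adj_inr_inr_iff (p q : Fin n × Fin 2) :
    (friendshipGraph n).Adj (Sum.inr p) (Sum.inr q) ↔ p ≠ q ∧ p.1 = q.1 := by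
  rw [friendshipGraph, SimpleGraph.fromRel_adj]
  constructor
  · rintro ⟨hne, h | h⟩
    · exact ⟨fun h' => hne (by rw [h']), h⟩
    · exact ⟨fun h' => hne (by rw [h']), h.symm⟩
  · rintro ⟨hne, h⟩
    exact ⟨by simpa using hne, Or.inl h⟩

lemma fin2_add_one_ne (a : Fin 2) : a + 1 ≠ a := by revert a; decide

lemma fin2_ne_add_one (a b : Fin 2) (h : b ≠ a + 1) : b = a := by revert a b; decide

lemma friend_step_empty (hn : 1 ≤ n) :
    skewStep (friendshipGraph n) (∅ : Set (Unit ⊕ Fin n × Fin 2)) = ∅ := by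
  ext w
  simp only [skewStep, Set.mem_union, Set.mem_empty_iff_false, false_or, Set.mem_setOf_eq,
    Set.notMem_empty, not_false_iff, forall_true_left, iff_false]
  rintro ⟨v, hvw, h⟩
  rcases v with u | p
  · have h0 := h (Sum.inr (⟨0, hn⟩, 0)) (friend_adj_hub_inr _)
    have h1 := h (Sum.inr (⟨0, hn⟩, 1)) (friend_adj_hub_inr _)
    rw [← h1] at h0
    injection h0 with h0
    exact absurd (congrArg Prod.snd h0) (by simp)
  · have h0 := h (Sum.inl ()) (friend_adj_inr_inl _ _)
    have h1 := h (Sum.inr (p.1, p.2 + 1))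
      ((friend_adj_inr_inr_iff _ _).mpr
        ⟨fun h' => (fin2_add_one_ne p.2) (congrArg Prod.snd h').symm, rfl⟩)
    rw [← h1] at h0
    exact absurd h0 (by simp)

lemma friend_iter_empty (hn : 1 ≤ n) (k : ℕ) :
    skewIter (friendshipGraph n) (∅ : Set (Unit ⊕ Fin n × Fin 2)) k = ∅ := by
  induction k with
  | zero => rfl
  | succ k ih => rw [skewIter, ih, friend_step_empty hn]

lemma friend_empty_not_zfs (hn : 1 ≤ n) :
    ¬ IsSkewZFS (friendshipGraph n) (∅ : Set (Unit ⊕ Fin n × Fin 2)) := by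
  rintro ⟨k, hk⟩
  rw [friend_iter_empty hn] at hk
  have : (Sum.inl () : Unit ⊕ Fin n × Fin 2) ∈ (∅ : Set (Unit ⊕ Fin n × Fin 2)) := by
    rw [hk]; trivial
  exact this

lemma friend_step_hub :
    skewStep (friendshipGraph n) ({Sum.inl ()} : Set (Unit ⊕ Fin n × Fin 2)) = Set.univ := by
  ext w
  simp only [Set.mem_univ, iff_true, skewStep, Set.mem_union, Set.mem_setOf_eq]
  rcases w with u | p
  · left; simp
  · right
    refine ⟨Sum.inr (p.1, p.2 + 1),
      (friend_adj_inr_inr_iff _ _).mpr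
        ⟨fun h' => (fin2_add_one_ne p.2) (congrArg Prod.snd h'), rfl⟩, ?_⟩
    rintro (u' | q) hadj hnot
    · exact absurd (by simp : (Sum.inl u' : Unit ⊕ Fin n × Fin 2) ∈ {Sum.inl ()}) hnot
    · rcases (friend_adj_inr_inr_iff _ _).mp hadj with ⟨hne, hfst⟩
      have h2 : q.2 = p.2 := by
        refine fin2_ne_add_one _ _ fun h' => hne ?_
        exact Prod.ext hfst (by exact h'.symm)
      have : q = p := Prod.ext hfst.symm h2
      rw [this]

lemma friend_hub_zfs :
    IsSkewZFS (friendshipGraph n) ({Sum.inl ()} : Set (Unit ⊕ Fin n × Fin 2)) :=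
  ⟨1, by rw [skewIter, skewIter, friend_step_hub]⟩

lemma friend_hub_pt (hn : 1 ≤ n) :
    skewPt (friendshipGraph n) ({Sum.inl ()} : Set (Unit ⊕ Fin n × Fin 2)) = 1 := by
  have h1 : (1 : ℕ) ∈ {k | skewIter (friendshipGraph n) ({Sum.inl ()} : Set (Unit ⊕ Fin n × Fin 2)) k = Set.univ} := by
    show skewIter _ _ 1 = _
    rw [skewIter, skewIter, friend_step_hub]
  have h0 : (0 : ℕ) ∉ {k | skewIter (friendshipGraph n) ({Sum.inl ()} : Set (Unit ⊕ Fin n × Fin 2)) k = Set.univ} := by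
    intro h
    have : (Sum.inr (⟨0, hn⟩, 0) : Unit ⊕ Fin n × Fin 2) ∈ ({Sum.inl ()} : Set (Unit ⊕ Fin n × Fin 2)) := by
      have := h.symm ▸ (Set.mem_univ (Sum.inr (⟨0, hn⟩, 0) : Unit ⊕ Fin n × Fin 2))
      exact this
    simp at this
  refine le_antisymm (Nat.sInf_le h1) ?_
  rcases Nat.eq_zero_or_pos (sInf _) with h | h
  · exact absurd (h ▸ Nat.sInf_mem ⟨1, h1⟩) h0
  · exact h

lemma friend_ncard_zero_eq_empty {S : Set (Unit ⊕ Fin n × Fin 2)} (h : S.ncard = 0) :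
    S = ∅ := (Set.ncard_eq_zero S.toFinite).mp h

lemma friend_pt_zero {S : Set (Unit ⊕ Fin n × Fin 2)}
    (hS : IsSkewZFS (friendshipGraph n) S) (h : skewPt (friendshipGraph n) S = 0) :
    S = Set.univ := by
  obtain ⟨k, hk⟩ := hS
  have := Nat.sInf_mem (⟨k, hk⟩ : {m | skewIter (friendshipGraph n) S m = Set.univ}.Nonempty)
  rw [skewPt] at h
  rw [h] at this
  exact this

lemma friend_ncard_univ :
    (Set.univ : Set (Unit ⊕ Fin n × Fin 2)).ncard = 1 + 2 * n := by
  rw [Set.ncard_univ, Nat.card_eq_fintype_card]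
  simp [Fintype.card_sum, Fintype.card_prod]
  ring

end FriendshipAux

/-- for `n ≥ 1`, the friendship graph satisfies `Z₋(Fₙ) = 1`,
`pt₋(Fₙ) = 1` and `th₋(Fₙ) = 2`. -/
theorem friendship_skew_invariants (n : ℕ) (hn : 1 ≤ n) :
    skewZ (friendshipGraph n) = 1 ∧ skewPtMin (friendshipGraph n) = 1 ∧
      skewTh (friendshipGraph n) = 2 := by
  have hcard1 : ({Sum.inl ()} : Set (Unit ⊕ Fin n × Fin 2)).ncard = 1 := Set.ncard_singleton _
  have hZ : skewZ (friendshipGraph n) = 1 := by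
    have h1 : (1 : ℕ) ∈ {m | ∃ S : Set (Unit ⊕ Fin n × Fin 2),
        IsSkewZFS (friendshipGraph n) S ∧ m = S.ncard} :=
      ⟨{Sum.inl ()}, friend_hub_zfs, hcard1.symm⟩
    refine le_antisymm (Nat.sInf_le h1) ?_
    rcases Nat.eq_zero_or_pos (sInf _) with h | h
    · exfalso
      obtain ⟨S, hS, hSc⟩ := h ▸ Nat.sInf_mem (⟨1, h1⟩ :
        {m | ∃ S : Set (Unit ⊕ Fin n × Fin 2),
          IsSkewZFS (friendshipGraph n) S ∧ m = S.ncard}.Nonempty)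
      rw [friend_ncard_zero_eq_empty hSc.symm] at hS
      exact friend_empty_not_zfs hn hS
    · exact h
  refine ⟨hZ, ?_, ?_⟩
  · -- skewPtMin
    have h1 : (1 : ℕ) ∈ {m | ∃ S : Set (Unit ⊕ Fin n × Fin 2),
        IsSkewZFS (friendshipGraph n) S ∧ S.ncard = skewZ (friendshipGraph n) ∧
          m = skewPt (friendshipGraph n) S} :=
      ⟨{Sum.inl ()}, friend_hub_zfs, by rw [hcard1, hZ], (friend_hub_pt hn).symm⟩
    refine le_antisymm (Nat.sInf_le h1) ?_
    rcases Nat.eq_zero_or_pos (sInf _) with h | h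
    · exfalso
      obtain ⟨S, hS, hSc, hpt⟩ := h ▸ Nat.sInf_mem (⟨1, h1⟩ :
        {m | ∃ S : Set (Unit ⊕ Fin n × Fin 2),
          IsSkewZFS (friendshipGraph n) S ∧ S.ncard = skewZ (friendshipGraph n) ∧
            m = skewPt (friendshipGraph n) S}.Nonempty)
      have hu : S = Set.univ := friend_pt_zero hS hpt.symm
      rw [hu, friend_ncard_univ, hZ] at hSc
      omega
    · exact h
  · -- skewTh
    have h2 : (2 : ℕ) ∈ {m | ∃ S : Set (Unit ⊕ Fin n × Fin 2),
        IsSkewZFS (friendshipGraph n) S ∧ m = S.ncard + skewPt (friendshipGraph n) S} :=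
      ⟨{Sum.inl ()}, friend_hub_zfs, by rw [hcard1, friend_hub_pt hn]⟩
    refine le_antisymm (Nat.sInf_le h2) (le_csInf ⟨2, h2⟩ ?_)
    rintro m ⟨S, hS, rfl⟩
    rcases Nat.eq_zero_or_pos (skewPt (friendshipGraph n) S) with hp | hp
    · have hu : S = Set.univ := friend_pt_zero hS hp
      rw [hu, friend_ncard_univ]
      omega
    · rcases Nat.eq_zero_or_pos S.ncard with hc | hc
      · exact absurd (friend_ncard_zero_eq_empty hc ▸ hS) (friend_empty_not_zfs hn)
      · omega
end

section
/- If G is a simple graph with pt_-(G) ≤ 2, then th_-(G) = Z_-(G) + pt_-(G). -/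
open SimpleGraph

lemma subset_skewStep {V : Type*} (G : SimpleGraph V) (B : Set V) : B ⊆ skewStep G B :=
  Set.subset_union_left

lemma skewIter_const {V : Type*} (G : SimpleGraph V) (S : Set V)
    (hS : skewStep G S = S) : ∀ n, skewIter G S n = S
  | 0 => rfl
  | n + 1 => by rw [skewIter, skewIter_const G S hS n, hS]

lemma skewIter_pt_eq_univ {V : Type*} (G : SimpleGraph V) (S : Set V)
    (hS : IsSkewZFS G S) : skewIter G S (skewPt G S) = Set.univ := by
  obtain ⟨n, hn⟩ := hS
  exact Nat.sInf_mem (⟨n, hn⟩ : {n | skewIter G S n = Set.univ}.Nonempty)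

/-- if `pt₋(G) ≤ 2` then `th₋(G) = Z₋(G) + pt₋(G)`. -/
theorem skewTh_eq_of_small_pt {V : Type*} [Fintype V] (G : SimpleGraph V)
    (h : skewPtMin G ≤ 2) :
    skewTh G = skewZ G + skewPtMin G := by
  classical
  have hzUniv : IsSkewZFS G (Set.univ : Set V) := ⟨0, rfl⟩
  have hZne : {m | ∃ S : Set V, IsSkewZFS G S ∧ m = S.ncard}.Nonempty :=
    ⟨(Set.univ : Set V).ncard, Set.univ, hzUniv, rfl⟩
  obtain ⟨S₁, hS₁z, hS₁c⟩ : ∃ S : Set V, IsSkewZFS G S ∧ skewZ G = S.ncard :=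
    Nat.sInf_mem hZne
  have hPtne : {m | ∃ S : Set V, IsSkewZFS G S ∧ S.ncard = skewZ G ∧ m = skewPt G S}.Nonempty :=
    ⟨skewPt G S₁, S₁, hS₁z, hS₁c.symm, rfl⟩
  obtain ⟨S₂, hS₂z, hS₂c, hS₂p⟩ :
      ∃ S : Set V, IsSkewZFS G S ∧ S.ncard = skewZ G ∧ skewPtMin G = skewPt G S :=
    Nat.sInf_mem hPtne
  -- upper bound
  have hle : skewTh G ≤ skewZ G + skewPtMin G := by
    have : skewZ G + skewPtMin G ∈
        {m | ∃ S : Set V, IsSkewZFS G S ∧ m = S.ncard + skewPt G S} :=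
      ⟨S₂, hS₂z, by rw [hS₂c, hS₂p]⟩
    exact Nat.sInf_le this
  -- lower bound
  obtain ⟨T, hTz, hTval⟩ :
      ∃ S : Set V, IsSkewZFS G S ∧ skewTh G = S.ncard + skewPt G S :=
    Nat.sInf_mem (⟨S₂.ncard + skewPt G S₂, S₂, hS₂z, rfl⟩ :
      {m | ∃ S : Set V, IsSkewZFS G S ∧ m = S.ncard + skewPt G S}.Nonempty)
  have hZT : skewZ G ≤ T.ncard := Nat.sInf_le ⟨T, hTz, rfl⟩
  have hge : skewZ G + skewPtMin G ≤ T.ncard + skewPt G T := by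
    rcases Nat.lt_or_ge T.ncard (skewZ G + 2) with hlt | hge2
    · rcases Nat.lt_or_ge T.ncard (skewZ G + 1) with hlt1 | hge1
      · -- T.ncard = skewZ G
        have hTZ : T.ncard = skewZ G := le_antisymm (by omega) hZT
        have : skewPtMin G ≤ skewPt G T := Nat.sInf_le ⟨T, hTz, hTZ, rfl⟩
        omega
      · -- T.ncard = skewZ G + 1
        have hTZ : T.ncard = skewZ G + 1 := by omega
        rcases Nat.eq_zero_or_pos (skewPt G T) with hp0 | hpos
        · -- skewPt G T = 0, so T = univ
          have hTuniv : T = Set.univ := by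
            have := skewIter_pt_eq_univ G T hTz
            rwa [hp0] at this
          have hcard : Fintype.card V = skewZ G + 1 := by
            rw [← hTZ, hTuniv, Set.ncard_univ, Nat.card_eq_fintype_card]
          -- S₂ has ncard = skewZ G, forces in one step
          have hne : skewStep G S₂ ≠ S₂ := by
            intro hfix
            obtain ⟨n, hn⟩ := hS₂z
            rw [skewIter_const G S₂ hfix n] at hn
            have : S₂.ncard = (Set.univ : Set V).ncard := by rw [hn]
            rw [Set.ncard_univ, Nat.card_eq_fintype_card, hS₂c, hcard] at this
            omega
          obtain ⟨w, hw1, hw2⟩ :=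
            Set.exists_of_ssubset ((subset_skewStep G S₂).ssubset_of_ne (Ne.symm hne))
          have hsub : insert w S₂ ⊆ skewStep G S₂ :=
            Set.insert_subset hw1 (subset_skewStep G S₂)
          have hstep : skewStep G S₂ = Set.univ := by
            apply Set.eq_of_subset_of_ncard_le (Set.subset_univ _)
            calc (Set.univ : Set V).ncard = skewZ G + 1 := by
                  rw [Set.ncard_univ, Nat.card_eq_fintype_card, hcard]
              _ = (insert w S₂).ncard := by
                  rw [Set.ncard_insert_of_notMem hw2 (Set.toFinite _), hS₂c]
              _ ≤ (skewStep G S₂).ncard := Set.ncard_le_ncard hsub (Set.toFinite _)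
          have h1 : skewIter G S₂ 1 = Set.univ := hstep
          have hpt1 : skewPt G S₂ ≤ 1 := Nat.sInf_le h1
          omega
        · omega
    · omega
  omega
end

section
/- For integers s ≥ 2 and n_1, …, n_s ≥ 1 with n = n_1 + n_2 + ⋯ + n_s, the complete multipartite graph K_{n_1, n_2, …, n_s} satisfies th_-(K_{n_1, n_2, …, n_s}) = n − 1. -/
open SimpleGraph

section CMPAux

variable {ι : Type*} {W : ι → Type*}

lemma cmg_adj (v w : Σ i, W i) :
    (completeMultipartiteGraph W).Adj v w ↔ v.1 ≠ w.1 := Iff.rfl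

lemma mem_skewStep_iff {V : Type*} (G : SimpleGraph V) (B : Set V) (w : V) :
    w ∈ skewStep G B ↔ w ∈ B ∨ ∃ v, G.Adj v w ∧ ∀ u, G.Adj v u → u ∉ B → u = w := by
  rfl

/-- Invariant showing a set can never force all vertices blue. -/
def CMPInv (B : Set (Σ i, W i)) : Prop :=
  (∃ w1 w2 : Σ i, W i, w1 ∉ B ∧ w2 ∉ B ∧ w1 ≠ w2 ∧ w1.1 = w2.1) ∨
  (∃ w1 w2 w3 : Σ i, W i, w1 ∉ B ∧ w2 ∉ B ∧ w3 ∉ B ∧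
      w1.1 ≠ w2.1 ∧ w1.1 ≠ w3.1 ∧ w2.1 ≠ w3.1)

lemma not_forced_pair {B : Set (Σ i, W i)} {w1 w2 : Σ i, W i}
    (h1 : w1 ∉ B) (h2 : w2 ∉ B) (hne : w1 ≠ w2) (hpart : w1.1 = w2.1) :
    w1 ∉ skewStep (completeMultipartiteGraph W) B := by
  rw [mem_skewStep_iff]
  rintro (h | ⟨v, hadj, hforce⟩)
  · exact h1 h
  · have hadj2 : (completeMultipartiteGraph W).Adj v w2 := by
      rw [cmg_adj] at hadj ⊢
      rw [← hpart]; exact hadj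
    exact hne ((hforce w2 hadj2 h2).symm)

lemma not_forced_triple {B : Set (Σ i, W i)} {w1 w2 w3 : Σ i, W i}
    (h2 : w2 ∉ B) (h3 : w3 ∉ B)
    (d12 : w1.1 ≠ w2.1) (d13 : w1.1 ≠ w3.1) (d23 : w2.1 ≠ w3.1)
    (h1 : w1 ∉ B) :
    w1 ∉ skewStep (completeMultipartiteGraph W) B := by
  rw [mem_skewStep_iff]
  rintro (h | ⟨v, hadj, hforce⟩)
  · exact h1 h
  · by_cases hv : v.1 = w2.1
    · have hadj3 : (completeMultipartiteGraph W).Adj v w3 := by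
        rw [cmg_adj]; rw [hv]; exact d23
      have := hforce w3 hadj3 h3
      exact d13 (by rw [this])
    · have hadj2 : (completeMultipartiteGraph W).Adj v w2 := hv
      have := hforce w2 hadj2 h2
      exact d12 (by rw [this])

lemma cmpInv_step {B : Set (Σ i, W i)} (h : CMPInv B) :
    CMPInv (skewStep (completeMultipartiteGraph W) B) := by
  rcases h with ⟨w1, w2, h1, h2, hne, hpart⟩ | ⟨w1, w2, w3, h1, h2, h3, d12, d13, d23⟩
  · exact Or.inl ⟨w1, w2, not_forced_pair h1 h2 hne hpart,
      not_forced_pair h2 h1 hne.symm hpart.symm, hne, hpart⟩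
  · exact Or.inr ⟨w1, w2, w3,
      not_forced_triple h2 h3 d12 d13 d23 h1,
      not_forced_triple h1 h3 d12.symm d23 d13 h2,
      not_forced_triple h1 h2 d13.symm d23.symm d12 h3,
      d12, d13, d23⟩

lemma cmpInv_iter {S : Set (Σ i, W i)} (h : CMPInv S) (k : ℕ) :
    CMPInv (skewIter (completeMultipartiteGraph W) S k) := by
  induction k with
  | zero => exact h
  | succ k ih => exact cmpInv_step ih

lemma not_cmpInv_of_zfs {S : Set (Σ i, W i)}
    (h : IsSkewZFS (completeMultipartiteGraph W) S) : ¬ CMPInv S := by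
  intro hInv
  obtain ⟨k, hk⟩ := h
  have := cmpInv_iter hInv k
  rw [hk] at this
  rcases this with ⟨w1, _, h1, _⟩ | ⟨w1, _, _, h1, _⟩ <;> exact h1 (Set.mem_univ w1)

lemma compl_ncard_le_two_of_zfs {s : ℕ} {n : Fin s → ℕ}
    {S : Set (Σ i : Fin s, Fin (n i))}
    (h : IsSkewZFS (completeMultipartiteGraph (fun i => Fin (n i))) S) :
    Sᶜ.ncard ≤ 2 := by
  by_contra hlt
  push_neg at hlt
  obtain ⟨a, ha, b, hb, c, hc, hab, hac, hbc⟩ := (Set.two_lt_ncard).1 hlt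
  apply not_cmpInv_of_zfs h
  by_cases hab1 : a.1 = b.1
  · exact Or.inl ⟨a, b, ha, hb, hab, hab1⟩
  by_cases hac1 : a.1 = c.1
  · exact Or.inl ⟨a, c, ha, hc, hac, hac1⟩
  by_cases hbc1 : b.1 = c.1
  · exact Or.inl ⟨b, c, hb, hc, hbc, hbc1⟩
  exact Or.inr ⟨a, b, c, ha, hb, hc, hab1, hac1, hbc1⟩

end CMPAux

/-- complete multipartite graphs have `th₋ = n - 1`. -/
theorem skewTh_completeMultipartite (s : ℕ) (hs : 2 ≤ s) (n : Fin s → ℕ)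
    (hn : ∀ i, 1 ≤ n i) :
    skewTh (completeMultipartiteGraph (fun i => Fin (n i))) = (∑ i, n i) - 1 := by
  classical
  set V := Σ i : Fin s, Fin (n i)
  set G := completeMultipartiteGraph (fun i : Fin s => Fin (n i)) with hG
  set N := ∑ i, n i with hNdef
  have hcard : Nat.card V = N := by
    simp [V, Nat.card_eq_fintype_card, Fintype.card_sigma, hNdef]
  have hN2 : 2 ≤ N := by
    calc 2 ≤ s := hs
    _ = ∑ _i : Fin s, 1 := by simp
    _ ≤ N := Finset.sum_le_sum (fun i _ => hn i)
  -- the two distinguished white vertices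
  set w1 : V := ⟨⟨0, by omega⟩, ⟨0, by have := hn ⟨0, by omega⟩; omega⟩⟩ with hw1
  set w2 : V := ⟨⟨1, by omega⟩, ⟨0, by have := hn ⟨1, by omega⟩; omega⟩⟩ with hw2
  have hw12 : w1.1 ≠ w2.1 := by
    simp [hw1, hw2, Fin.ext_iff]
  have hne : w1 ≠ w2 := fun h => hw12 (by rw [h])
  set S : Set V := ({w1, w2} : Set V)ᶜ with hSdef
  have hw1S : w1 ∉ S := by simp [hSdef]
  have hstep : skewStep G S = Set.univ := by
    ext w
    simp only [Set.mem_univ, iff_true]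
    rw [mem_skewStep_iff]
    by_cases hw : w ∈ S
    · exact Or.inl hw
    · have hw' : w = w1 ∨ w = w2 := by
        rw [or_iff_not_imp_left]; simpa [hSdef] using hw
      right
      rcases hw' with rfl | rfl
      · refine ⟨w2, ?_, ?_⟩
        · exact fun h => hw12 (by rw [h])
        · intro u hadj hu
          have : u = w1 ∨ u = w2 := by rw [or_iff_not_imp_left]; simpa [hSdef] using hu
          rcases this with rfl | rfl
          · rfl
          · exact absurd rfl (G.ne_of_adj hadj)
      · refine ⟨w1, ?_, ?_⟩
        · exact hw12
        · intro u hadj hu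
          have : u = w1 ∨ u = w2 := by rw [or_iff_not_imp_left]; simpa [hSdef] using hu
          rcases this with rfl | rfl
          · exact absurd rfl (G.ne_of_adj hadj)
          · rfl
  have hZFS : IsSkewZFS G S := ⟨1, by simpa [skewIter] using hstep⟩
  have hSnotuniv : S ≠ Set.univ := by
    intro h
    exact hw1S (h ▸ Set.mem_univ w1)
  have hpt : skewPt G S = 1 := by
    have h1 : (1 : ℕ) ∈ {k | skewIter G S k = Set.univ} := by
      simpa [skewIter] using hstep
    have hle : skewPt G S ≤ 1 := Nat.sInf_le h1
    have hmem := Nat.sInf_mem ⟨1, h1⟩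
    have h0 : skewPt G S ≠ 0 := by
      intro h
      rw [skewPt] at h
      rw [h] at hmem
      exact hSnotuniv hmem
    rw [skewPt] at hle h0 ⊢
    omega
  have hSncard : S.ncard = N - 2 := by
    have h2 : ({w1, w2} : Set V).ncard = 2 := Set.ncard_pair hne
    have := Set.ncard_add_ncard_compl ({w1, w2} : Set V)
    rw [h2, hcard] at this
    rw [hSdef]
    omega
  have hmemTh : N - 1 ∈ {m | ∃ T : Set V, IsSkewZFS G T ∧ m = T.ncard + skewPt G T} := by
    refine ⟨S, hZFS, ?_⟩
    rw [hpt, hSncard]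
    omega
  have hlow : ∀ m ∈ {m | ∃ T : Set V, IsSkewZFS G T ∧ m = T.ncard + skewPt G T},
      N - 1 ≤ m := by
    rintro m ⟨T, hT, rfl⟩
    have hcompl : Tᶜ.ncard ≤ 2 := compl_ncard_le_two_of_zfs hT
    have hsum : T.ncard + Tᶜ.ncard = N := by
      rw [Set.ncard_add_ncard_compl, hcard]
    by_cases hTu : T = Set.univ
    · have : T.ncard = N := by rw [hTu, Set.ncard_univ, hcard]
      omega
    · have hptT : 1 ≤ skewPt G T := by
        obtain ⟨k, hk⟩ := hT
        have hmem := Nat.sInf_mem (⟨k, hk⟩ : {k | skewIter G T k = Set.univ}.Nonempty)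
        rcases Nat.eq_zero_or_pos (skewPt G T) with h | h
        · exfalso
          rw [skewPt] at h
          rw [h] at hmem
          exact hTu hmem
        · exact h
      omega
  refine le_antisymm (Nat.sInf_le hmemTh) (le_csInf ⟨_, hmemTh⟩ hlow)
end
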